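/- arXiv:2002.10589 — 3 statements merged into one kernel-verified Lean document; each statement's English description precedes it below -/
import Mathlib

section
/- Let G be a group, p a prime, and k, l ≥ 1 integers. If f is an automorphism of G such that f(x)·x⁻¹ ∈ G^S_{k+1} for every x ∈ G, then for every x ∈ G^S_l one has f(x)·x⁻¹ ∈ G^S_{k+l}. -/
open scoped commutatorElement in
/-- The Stallings mod-`p` central series: `G^S_1 = G` and
`G^S_{k+1} = [G, G^S_k]·(G^S_k)^p`, the subgroup generated by all commutators `⁅g, y⁆`
with `g ∈ G`, `y ∈ G^S_k`, together with all `p`-th powers `y^p` with `y ∈ G^S_k`.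
(The value at `0` is a junk value, set to `⊤`.) -/
def stallings (p : ℕ) (G : Type*) [Group G] : ℕ → Subgroup G
  | 0 => ⊤
  | 1 => ⊤
  | (k + 2) =>
    Subgroup.closure
      {x : G | (∃ g : G, ∃ y ∈ stallings p G (k + 1), x = ⁅g, y⁆) ∨
        ∃ y ∈ stallings p G (k + 1), x = y ^ p}

/-- The Zassenhaus mod-`p` central series: `G^Z_k` is the subgroup generated by all
elements `y ^ (p ^ j)` with `y ∈ G_i` (the `i`-th term of the lower central series,
`G_1 = G`), `j ≥ 0` and `i·p^j ≥ k`. -/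
def zassenhaus (p : ℕ) (G : Type*) [Group G] (k : ℕ) : Subgroup G :=
  Subgroup.closure
    {x : G | ∃ i j : ℕ, 1 ≤ i ∧ k ≤ i * p ^ j ∧
      ∃ y ∈ (⊤ : Subgroup G).lowerCentralSeries (i - 1), x = y ^ p ^ j}

open scoped commutatorElement

namespace StallingsIAAux

open Subgroup

/-- The generating set of `stallings p G (n+2)`. -/
def SSet (p : ℕ) (G : Type*) [Group G] (n : ℕ) : Set G :=
  {x : G | (∃ g : G, ∃ y ∈ stallings p G (n + 1), x = ⁅g, y⁆) ∨
    ∃ y ∈ stallings p G (n + 1), x = y ^ p}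

variable {G : Type*} [Group G] (p : ℕ)

lemma stallings_succ_succ (n : ℕ) :
    stallings p G (n + 2) = Subgroup.closure (SSet p G n) := rfl

lemma mem_closure_sset {m n : ℕ} {s : G} (h : m = n + 2) (hs : s ∈ stallings p G m) :
    s ∈ Subgroup.closure (SSet p G n) := by subst h; exact hs

lemma mem_of_mem_closure_sset {m n : ℕ} {s : G} (h : m = n + 2)
    (hs : s ∈ Subgroup.closure (SSet p G n)) : s ∈ stallings p G m := by subst h; exact hs

lemma mem_comm {n : ℕ} {y : G} (g : G) (hy : y ∈ stallings p G (n + 1)) :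
    ⁅g, y⁆ ∈ stallings p G (n + 2) :=
  Subgroup.subset_closure (Or.inl ⟨g, y, hy, rfl⟩)

lemma mem_pow {n : ℕ} {y : G} (hy : y ∈ stallings p G (n + 1)) :
    y ^ p ∈ stallings p G (n + 2) :=
  Subgroup.subset_closure (Or.inr ⟨y, hy, rfl⟩)

theorem stallings_normal : ∀ m : ℕ, (stallings p G m).Normal
  | 0 => inferInstanceAs (⊤ : Subgroup G).Normal
  | 1 => inferInstanceAs (⊤ : Subgroup G).Normal
  | (n + 2) => by
    constructor
    intro x hx g
    rw [stallings_succ_succ] at hx ⊢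
    induction hx using Subgroup.closure_induction with
    | mem s hs =>
      rcases hs with ⟨h, y, hy, rfl⟩ | ⟨y, hy, rfl⟩
      · rw [conjugate_commutatorElement]
        exact Subgroup.subset_closure
          (Or.inl ⟨g * h * g⁻¹, g * y * g⁻¹, (stallings_normal (n + 1)).conj_mem y hy g, rfl⟩)
      · rw [← conj_pow]
        exact Subgroup.subset_closure
          (Or.inr ⟨g * y * g⁻¹, (stallings_normal (n + 1)).conj_mem y hy g, rfl⟩)
    | one => simpa using Subgroup.one_mem _
    | mul s t _ _ ps pt =>
      convert Subgroup.mul_mem _ ps pt using 1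
      group
    | inv s _ ps =>
      convert Subgroup.inv_mem _ ps using 1
      group

theorem stallings_succ_le : ∀ m : ℕ, stallings p G (m + 1) ≤ stallings p G m
  | 0 => le_top
  | 1 => le_top
  | (n + 2) => by
    have heq : stallings p G (n + 2 + 1) = Subgroup.closure (SSet p G (n + 1)) := rfl
    rw [heq]
    refine (Subgroup.closure_le _).mpr ?_
    rintro x (⟨g, y, hy, rfl⟩ | ⟨y, hy, rfl⟩)
    · haveI := stallings_normal (G := G) p (n + 2)
      rw [commutatorElement_def]
      exact mul_mem (this.conj_mem y hy g) (inv_mem hy)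
    · exact pow_mem hy p

theorem stallings_le {m n : ℕ} (h : m ≤ n) : stallings p G n ≤ stallings p G m := by
  induction n, h using Nat.le_induction with
  | base => exact le_rfl
  | succ n hn ih => exact (stallings_succ_le p n).trans ih

/-- Three subgroups lemma, `≤ K` version. -/
theorem three_subgroups {H₁ H₂ H₃ K : Subgroup G} [K.Normal]
    (h1 : ⁅⁅H₂, H₃⁆, H₁⁆ ≤ K) (h2 : ⁅⁅H₃, H₁⁆, H₂⁆ ≤ K) : ⁅⁅H₁, H₂⁆, H₃⁆ ≤ K := by
  rw [← QuotientGroup.ker_mk' K, ← Subgroup.map_eq_bot_iff,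
    Subgroup.map_commutator, Subgroup.map_commutator] at h1 h2 ⊢
  exact Subgroup.commutator_commutator_eq_bot_of_rotate h1 h2

theorem comm_top {a : ℕ} (ha : 1 ≤ a) :
    ⁅stallings p G a, (⊤ : Subgroup G)⁆ ≤ stallings p G (a + 1) := by
  obtain ⟨a', rfl⟩ : ∃ a', a = a' + 1 := ⟨a - 1, (Nat.succ_pred_eq_of_pos ha).symm⟩
  rw [Subgroup.commutator_le]
  intro x hx g _
  rw [← commutatorElement_inv]
  exact inv_mem (mem_comm p g hx)

/-- If `⁅u, v⁆` is central then `⁅u, v ^ n⁆ = ⁅u, v⁆ ^ n`. -/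
lemma comm_pow_central {Q : Type*} [Group Q] (u v : Q) (h : ∀ z, Commute ⁅u, v⁆ z) :
    ∀ n : ℕ, ⁅u, v ^ n⁆ = ⁅u, v⁆ ^ n
  | 0 => by simp
  | (n + 1) => by
    have h1 : ⁅u, v * v ^ n⁆ = ⁅u, v⁆ * (v * ⁅u, v ^ n⁆ * v⁻¹) := by
      simp only [commutatorElement_def, mul_inv_rev]
      group
    rw [pow_succ', h1, comm_pow_central u v h n, ← ((h v).pow_left n).eq,
      mul_inv_cancel_right, ← pow_succ']

theorem stallings_comm : ∀ b : ℕ, 1 ≤ b → ∀ a : ℕ, 1 ≤ a →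
    ⁅stallings p G a, stallings p G b⁆ ≤ stallings p G (a + b) := by
  intro b hb
  induction b, hb using Nat.le_induction with
  | base =>
    intro a ha
    exact comm_top p ha
  | succ b hb ih =>
    intro a ha
    obtain ⟨b', rfl⟩ : ∃ b', b = b' + 1 := ⟨b - 1, (Nat.succ_pred_eq_of_pos hb).symm⟩
    haveI hN : (stallings p G (a + (b' + 1 + 1))).Normal := stallings_normal p _
    rw [Subgroup.commutator_le]
    intro x hx s hs
    have hs' : s ∈ Subgroup.closure (SSet p G b') := mem_closure_sset p rfl hs
    clear hs
    induction hs' using Subgroup.closure_induction with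
    | mem s hs =>
      rcases hs with ⟨g, y, hy, rfl⟩ | ⟨y, hy, rfl⟩
      · -- commutator generator: use the three subgroups lemma
        have key : ⁅⁅(⊤ : Subgroup G), stallings p G (b' + 1)⁆, stallings p G a⁆ ≤
            stallings p G (a + (b' + 1 + 1)) := by
          apply three_subgroups
          · refine le_trans (Subgroup.commutator_mono
              ((Subgroup.commutator_comm _ _).le.trans (ih a ha)) le_rfl) ?_
            have h := comm_top (G := G) p (a := a + (b' + 1)) (by omega)
            rwa [show a + (b' + 1) + 1 = a + (b' + 1 + 1) from by omega] at h
          · refine le_trans (Subgroup.commutator_mono (comm_top p ha) le_rfl) ?_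
            have h := ih (a + 1) (by omega)
            rwa [show a + 1 + (b' + 1) = a + (b' + 1 + 1) from by omega] at h
        have key2 : ⁅stallings p G a, ⁅(⊤ : Subgroup G), stallings p G (b' + 1)⁆⁆ ≤
            stallings p G (a + (b' + 1 + 1)) :=
          (Subgroup.commutator_comm _ _).le.trans key
        exact key2 (Subgroup.commutator_mem_commutator hx
          (Subgroup.commutator_mem_commutator (Subgroup.mem_top g) hy))
      · -- p-th power generator: quotient argument
        have hxy : ⁅x, y⁆ ∈ stallings p G (a + (b' + 1)) :=
          ih a ha (Subgroup.commutator_mem_commutator hx hy)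
        set N := stallings p G (a + (b' + 1 + 1)) with hNdef
        set π : G →* G ⧸ N := QuotientGroup.mk' N with hπ
        have hc' : ∀ z : G ⧸ N, Commute ⁅π x, π y⁆ z := by
          intro z
          induction z using QuotientGroup.induction_on with
          | _ w =>
            have hm : ⁅⁅x, y⁆, w⁆ ∈ N := by
              have h := comm_top (G := G) p (a := a + (b' + 1)) (by omega)
              rw [show a + (b' + 1) + 1 = a + (b' + 1 + 1) from by omega] at h
              exact h (Subgroup.commutator_mem_commutator hxy (Subgroup.mem_top w))
            have : π ⁅⁅x, y⁆, w⁆ = 1 := (QuotientGroup.eq_one_iff _).mpr hm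
            rw [map_commutatorElement, map_commutatorElement] at this
            exact commutatorElement_eq_one_iff_commute.mp this
        have key : π ⁅x, y ^ p⁆ = 1 := by
          rw [map_commutatorElement, map_pow, comm_pow_central _ _ hc' p,
            ← map_commutatorElement, ← map_pow]
          exact (QuotientGroup.eq_one_iff _).mpr (mem_pow p hxy)
        exact (QuotientGroup.eq_one_iff _).mp key
    | one => simpa using Subgroup.one_mem _
    | mul s t _ _ ps pt =>
      have hid : ⁅x, s * t⁆ = ⁅x, s⁆ * (s * ⁅x, t⁆ * s⁻¹) := by
        simp only [commutatorElement_def, mul_inv_rev]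
        group
      rw [hid]
      exact mul_mem ps (hN.conj_mem _ pt s)
    | inv s _ ps =>
      have hid : ⁅x, s⁻¹⁆ = s⁻¹ * ⁅x, s⁆⁻¹ * s⁻¹⁻¹ := by
        simp only [commutatorElement_def, mul_inv_rev]
        group
      rw [hid]
      exact hN.conj_mem _ (inv_mem ps) s⁻¹

/-- The key pure-group computation in the quotient. -/
lemma conj_comm_eq {Q : Type*} [Group Q] (A g B y : Q) (hB : ∀ z, Commute B z)
    (hAY : ⁅A, y⁆ = 1) (hAc : ⁅A, ⁅g, y⁆⁆ = 1) : ⁅A * g, B * y⁆ = ⁅g, y⁆ := by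
  have e : Commute A ⁅g, y⁆ := commutatorElement_eq_one_iff_commute.mp hAc
  calc ⁅A * g, B * y⁆
      = B * ⁅A * g, y⁆ * B⁻¹ := by
        have e2 : (A * g) * (B * y) = B * ((A * g) * y) := by
          rw [← mul_assoc, ← (hB (A * g)).eq, mul_assoc]
        simp only [commutatorElement_def, mul_inv_rev]
        rw [e2]
        group
    _ = B * ⁅g, y⁆ * B⁻¹ := by
        have idt : ⁅A * g, y⁆ = A * ⁅g, y⁆ * A⁻¹ * ⁅A, y⁆ := by
          simp only [commutatorElement_def, mul_inv_rev]
          group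
        rw [idt, hAY, mul_one, e.eq, mul_inv_cancel_right]
    _ = ⁅g, y⁆ := by rw [(hB _).eq, mul_inv_cancel_right]

end StallingsIAAux

open StallingsIAAux Subgroup in
theorem stallings_IA_action (G : Type*) [Group G] (p : ℕ) (hp : p.Prime)
    (k l : ℕ) (hk : 1 ≤ k) (hl : 1 ≤ l) (f : MulAut G)
    (hf : ∀ x : G, f x * x⁻¹ ∈ stallings p G (k + 1)) :
    ∀ x ∈ stallings p G l, f x * x⁻¹ ∈ stallings p G (k + l) := by
  induction l, hl using Nat.le_induction with
  | base => exact fun x _ => hf x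
  | succ l hl ih =>
    obtain ⟨l', rfl⟩ : ∃ l', l = l' + 1 := ⟨l - 1, (Nat.succ_pred_eq_of_pos hl).symm⟩
    intro x hx
    set N := stallings p G (k + (l' + 1 + 1)) with hNdef
    haveI hN : N.Normal := stallings_normal p _
    have hx' : x ∈ Subgroup.closure (SSet p G l') := mem_closure_sset p rfl hx
    clear hx
    induction hx' using Subgroup.closure_induction with
    | mem s hs =>
      set π : G →* G ⧸ N := QuotientGroup.mk' N with hπ
      have hB : ∀ y : G, y ∈ stallings p G (l' + 1) → ∀ z : G ⧸ N,
          Commute (π (f y * y⁻¹)) z := by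
        intro y hy z
        induction z using QuotientGroup.induction_on with
        | _ w =>
          have hm : ⁅f y * y⁻¹, w⁆ ∈ N := by
            have h := comm_top (G := G) p (a := k + (l' + 1)) (by omega)
            rw [show k + (l' + 1) + 1 = k + (l' + 1 + 1) from by omega] at h
            exact h (Subgroup.commutator_mem_commutator (ih y hy) (Subgroup.mem_top w))
          have h1 : π ⁅f y * y⁻¹, w⁆ = 1 := (QuotientGroup.eq_one_iff _).mpr hm
          rw [map_commutatorElement] at h1
          exact commutatorElement_eq_one_iff_commute.mp h1
      rcases hs with ⟨g, y, hy, rfl⟩ | ⟨y, hy, rfl⟩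
      · -- commutator generator
        have ha : f g * g⁻¹ ∈ stallings p G (k + 1) := hf g
        have hAY : π ⁅f g * g⁻¹, y⁆ = 1 := by
          refine (QuotientGroup.eq_one_iff _).mpr ?_
          have h := stallings_comm (G := G) p (l' + 1) (by omega) (k + 1) (by omega)
          rw [show k + 1 + (l' + 1) = k + (l' + 1 + 1) from by omega] at h
          exact h (Subgroup.commutator_mem_commutator ha hy)
        have hAc : π ⁅f g * g⁻¹, ⁅g, y⁆⁆ = 1 := by
          refine (QuotientGroup.eq_one_iff _).mpr ?_
          have h := stallings_comm (G := G) p (l' + 2) (by omega) (k + 1) (by omega)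
          have h' := h.trans
            (stallings_le p (show k + (l' + 1 + 1) ≤ k + 1 + (l' + 2) from by omega))
          exact h' (Subgroup.commutator_mem_commutator ha (mem_comm p g hy))
        have key : π (f ⁅g, y⁆) = π ⁅g, y⁆ := by
          have hexp : f ⁅g, y⁆ = ⁅(f g * g⁻¹) * g, (f y * y⁻¹) * y⁆ := by
            rw [inv_mul_cancel_right, inv_mul_cancel_right, map_commutatorElement]
          rw [hexp, map_commutatorElement, map_mul, map_mul, map_commutatorElement]
          refine conj_comm_eq (π (f g * g⁻¹)) (π g) (π (f y * y⁻¹)) (π y) (hB y hy) ?_ ?_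
          · rw [← map_commutatorElement]
            exact hAY
          · rw [← map_commutatorElement, ← map_commutatorElement]
            exact hAc
        refine (QuotientGroup.eq_one_iff _).mp ?_
        show π (f ⁅g, y⁆ * ⁅g, y⁆⁻¹) = 1
        rw [map_mul, map_inv, key, mul_inv_cancel]
      · -- p-th power generator
        have hb : f y * y⁻¹ ∈ stallings p G (k + (l' + 1)) := ih y hy
        have hbp : π ((f y * y⁻¹) ^ p) = 1 :=
          (QuotientGroup.eq_one_iff _).mpr (mem_pow p hb)
        have key : π (f (y ^ p)) = π (y ^ p) := by
          have hexp : f (y ^ p) = ((f y * y⁻¹) * y) ^ p := by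
            rw [inv_mul_cancel_right, map_pow]
          rw [hexp, map_pow, map_mul, (hB y hy (π y)).mul_pow, ← map_pow, ← map_pow,
            hbp, one_mul]
        refine (QuotientGroup.eq_one_iff _).mp ?_
        show π (f (y ^ p) * (y ^ p)⁻¹) = 1
        rw [map_mul, map_inv, key, mul_inv_cancel]
    | one => simpa using Subgroup.one_mem N
    | mul s t _ _ ps pt =>
      have hid : f (s * t) * (s * t)⁻¹ = (f s * s⁻¹) * (s * (f t * t⁻¹) * s⁻¹) := by
        rw [map_mul]; group
      rw [hid]
      exact mul_mem ps (hN.conj_mem _ pt s)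
    | inv s _ ps =>
      have hid : f s⁻¹ * s⁻¹⁻¹ = (s⁻¹ * (f s * s⁻¹) * s⁻¹⁻¹)⁻¹ := by
        rw [map_inv]; group
      rw [hid]
      exact inv_mem (hN.conj_mem _ ps s⁻¹)
end

section
/- Let p be an odd prime and Γ a free group of finite rank, and let π : Γ/Γ^Z_3 → Γ/Γ^Z_2 be the canonical projection. Then there exists a group homomorphism s : Aut(Γ/Γ^Z_2) → Aut(Γ/Γ^Z_3) such that π ∘ s(φ) = φ ∘ π for every automorphism φ of Γ/Γ^Z_2; that is, the extension 0 → Hom(Γ/Γ^Z_2, Γ^Z_2/Γ^Z_3) → Aut(Γ/Γ^Z_3) → Aut(Γ/Γ^Z_2) → 1 splits. -/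
theorem closure_normal_of_conj {G : Type*} [Group G] {s : Set G}
    (h : ∀ g : G, ∀ x ∈ s, g * x * g⁻¹ ∈ s) : (Subgroup.closure s).Normal := by
  constructor
  intro n hn g
  have key : Subgroup.closure s ≤
      Subgroup.comap (MulAut.conj g).toMonoidHom (Subgroup.closure s) := by
    rw [Subgroup.closure_le]
    intro x hx
    have : (MulAut.conj g).toMonoidHom x ∈ Subgroup.closure s :=
      Subgroup.subset_closure (by simpa [MulAut.conj_apply] using h g x hx)
    exact this
  have := key hn
  rw [Subgroup.mem_comap] at this
  simpa [MulAut.conj_apply] using this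

instance zassenhaus_normal (p : ℕ) (G : Type*) [Group G] (k : ℕ) :
    (zassenhaus p G k).Normal := by
  apply closure_normal_of_conj
  rintro g x ⟨i, j, hi, hk, y, hy, rfl⟩
  exact ⟨i, j, hi, hk, g * y * g⁻¹,
    (Subgroup.lowerCentralSeries_normal ⊤ (i-1)).conj_mem y hy g, (conj_pow ..).symm⟩

theorem zassenhaus_antitone (p : ℕ) (G : Type*) [Group G] :
    Antitone (zassenhaus p G) := by
  intro a b hab
  apply Subgroup.closure_mono
  rintro x ⟨i, j, hi, hk, y, hy, rfl⟩
  exact ⟨i, j, hi, le_trans hab hk, y, hy, rfl⟩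

def zassenhausProj (p : ℕ) (G : Type*) [Group G] (k k' : ℕ) (h : k ≤ k') :
    (G ⧸ zassenhaus p G k') →* (G ⧸ zassenhaus p G k) :=
  QuotientGroup.map _ _ (MonoidHom.id G) (fun _ hx => zassenhaus_antitone p G h hx)


open scoped commutatorElement IsMulCommutative

section Class2
variable {G : Type*} [Group G]

theorem comm_central (hc : ∀ x y z : G, ⁅⁅x,y⁆,z⁆ = 1) (x y z : G) :
    ⁅x,y⁆ * z = z * ⁅x,y⁆ :=
  (commutatorElement_eq_one_iff_mul_comm.mp (hc x y z))

theorem comm_mem_center (hc : ∀ x y z : G, ⁅⁅x,y⁆,z⁆ = 1) (x y : G) :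
    ⁅x,y⁆ ∈ Subgroup.center G := by
  rw [Subgroup.mem_center_iff]
  intro g
  exact (comm_central hc x y g).symm

/-- commutator bundled into the center -/
def cc (hc : ∀ x y z : G, ⁅⁅x,y⁆,z⁆ = 1) (x y : G) : Subgroup.center G :=
  ⟨⁅x,y⁆, comm_mem_center hc x y⟩

@[simp] theorem cc_coe (hc : ∀ x y z : G, ⁅⁅x,y⁆,z⁆ = 1) (x y : G) :
    (cc hc x y : G) = ⁅x,y⁆ := rfl

theorem mul_swap (hc : ∀ x y z : G, ⁅⁅x,y⁆,z⁆ = 1) (x y : G) :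
    y * x = x * y * ⁅y,x⁆ := by
  have h1 : ⁅y,x⁆ * x * y = y * x := by group
  rw [← h1, comm_central hc, mul_assoc, mul_assoc, comm_central hc]

theorem comm_mul_left (hc : ∀ x y z : G, ⁅⁅x,y⁆,z⁆ = 1) (x y z : G) :
    ⁅x*y, z⁆ = ⁅y,z⁆ * ⁅x,z⁆ := by
  have h1 : ⁅x*y, z⁆ = x * ⁅y,z⁆ * x⁻¹ * ⁅x,z⁆ := by group
  rw [h1, show x * ⁅y,z⁆ = ⁅y,z⁆ * x from (comm_central hc _ _ _).symm]
  group

theorem comm_mul_left' (hc : ∀ x y z : G, ⁅⁅x,y⁆,z⁆ = 1) (x y z : G) :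
    ⁅x*y, z⁆ = ⁅x,z⁆ * ⁅y,z⁆ := by
  rw [comm_mul_left hc, comm_central hc]

theorem comm_mul_right (hc : ∀ x y z : G, ⁅⁅x,y⁆,z⁆ = 1) (x y z : G) :
    ⁅x, y*z⁆ = ⁅x,y⁆ * ⁅x,z⁆ := by
  have h1 : ⁅x, y*z⁆ = ⁅x,y⁆ * (y * ⁅x,z⁆ * y⁻¹) := by group
  rw [h1, show y * ⁅x,z⁆ = ⁅x,z⁆ * y from (comm_central hc _ _ _).symm]
  group

theorem comm_pow_left (hc : ∀ x y z : G, ⁅⁅x,y⁆,z⁆ = 1) (x z : G) (m : ℕ) :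
    ⁅x^m, z⁆ = ⁅x,z⁆^m := by
  induction m with
  | zero => simp
  | succ k ih => rw [pow_succ, comm_mul_left' hc, ih, pow_succ]

theorem comm_pow_right (hc : ∀ x y z : G, ⁅⁅x,y⁆,z⁆ = 1) (x z : G) (m : ℕ) :
    ⁅x, z^m⁆ = ⁅x,z⁆^m := by
  induction m with
  | zero => simp
  | succ k ih => rw [pow_succ, comm_mul_right hc, ih, pow_succ]

theorem cc_pow (hc : ∀ x y z : G, ⁅⁅x,y⁆,z⁆ = 1) (u w : G) (s t : ℕ) :
    cc hc (u^s) (w^t) = (cc hc u w)^(s*t) := by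
  ext
  show ⁅u^s, w^t⁆ = (⁅u,w⁆:G)^(s*t)
  rw [comm_pow_left hc, comm_pow_right hc, ← pow_mul, Nat.mul_comm]

theorem cc_swap (hc : ∀ x y z : G, ⁅⁅x,y⁆,z⁆ = 1) (u w : G) :
    cc hc u w = (cc hc w u)⁻¹ := by
  ext
  show ⁅u, w⁆ = (⁅w,u⁆:G)⁻¹
  rw [commutatorElement_inv]

/-- ordered product a 0 * a 1 * ... * a (m-1) -/
def Pprod : (m : ℕ) → (Fin m → G) → G
  | 0, _ => 1
  | m+1, a => Pprod m (fun i => a (Fin.castSucc i)) * a (Fin.last m)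

theorem Pprod_hom {G' : Type*} [Group G'] (f : G →* G') :
    ∀ (m : ℕ) (a : Fin m → G), f (Pprod m a) = Pprod m (fun i => f (a i))
  | 0, _ => by simp [Pprod]
  | m+1, a => by simp [Pprod, Pprod_hom f m]

theorem Pprod_mem (K : Subgroup G) :
    ∀ (m : ℕ) (a : Fin m → G), (∀ i, a i ∈ K) → Pprod m a ∈ K
  | 0, _, _ => K.one_mem
  | m+1, a, h => K.mul_mem (Pprod_mem K m _ (fun i => h _)) (h _)

theorem Pprod_eq_one : ∀ (m : ℕ) (a : Fin m → G), (∀ i, a i = 1) → Pprod m a = 1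
  | 0, _, _ => rfl
  | m+1, a, h => by simp [Pprod, Pprod_eq_one m _ (fun i => h _), h (Fin.last m)]

theorem Pprod_eq_single : ∀ (m : ℕ) (a : Fin m → G) (k : Fin m),
    (∀ i, i ≠ k → a i = 1) → Pprod m a = a k
  | 0, _, k, _ => k.elim0
  | m+1, a, k, h => by
    rcases eq_or_ne k (Fin.last m) with rfl | hk
    · rw [Pprod, Pprod_eq_one m _ (fun i => h _ (Fin.castSucc_lt_last i).ne), one_mul]
    · obtain ⟨k', rfl⟩ := Fin.exists_castSucc_eq.mpr hk
      rw [Pprod, Pprod_eq_single m _ k' (fun i hi => h _ (by simpa using hi)),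
        h (Fin.last m) (Fin.castSucc_lt_last k').ne', mul_one]

theorem center_comm (u : Subgroup.center G) (x : G) : (u:G) * x = x * u := by
  have := u.2
  rw [Subgroup.mem_center_iff] at this
  exact (this x).symm

theorem center_mid (w q r : G) (u : Subgroup.center G) :
    w * ↑u * q * r = w * q * (↑u * r) := by
  rw [mul_assoc w, center_comm u q, ← mul_assoc w, mul_assoc (w*q)]

theorem Pprod_ofAdd {α : Type*} [AddCommGroup α] :
    ∀ (m : ℕ) (w : Fin m → α),
    Pprod m (fun i => Multiplicative.ofAdd (w i)) = Multiplicative.ofAdd (∑ i, w i)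
  | 0, w => by simp [Pprod]
  | m+1, w => by
    rw [Pprod, Pprod_ofAdd m, ← ofAdd_add, Fin.sum_univ_castSucc]

theorem Pprod_swap (hc : ∀ x y z : G, ⁅⁅x,y⁆,z⁆ = 1) :
    ∀ (m : ℕ) (a : Fin m → G) (z : G),
    Pprod m a * z = z * Pprod m a * ↑(∏ i : Fin m, cc hc (a i) z)
  | 0, a, z => by simp [Pprod]
  | m+1, a, z => by
    calc Pprod (m+1) a * z
        = Pprod m (fun i => a (Fin.castSucc i)) * (a (Fin.last m) * z) := by
          rw [Pprod, mul_assoc]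
      _ = Pprod m (fun i => a (Fin.castSucc i)) * z * a (Fin.last m) *
            ⁅a (Fin.last m), z⁆ := by
          rw [mul_swap hc z (a (Fin.last m))]; group
      _ = z * Pprod m (fun i => a (Fin.castSucc i)) *
            ↑(∏ i : Fin m, cc hc (a (Fin.castSucc i)) z) * a (Fin.last m) *
            ⁅a (Fin.last m), z⁆ := by
          rw [Pprod_swap hc m _ z]
      _ = z * Pprod (m+1) a *
            (↑(∏ i : Fin m, cc hc (a (Fin.castSucc i)) z) * ⁅a (Fin.last m), z⁆) := by
          rw [Pprod, center_mid (z * _) (a (Fin.last m)) _ _, mul_assoc z]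
      _ = z * Pprod (m+1) a * ↑(∏ i : Fin (m+1), cc hc (a i) z) := by
          rw [Fin.prod_univ_castSucc (f := fun i => cc hc (a i) z)]
          push_cast
          rfl

theorem center_mul_mul (x y : G) (u w : Subgroup.center G) :
    (x * ↑u) * (y * ↑w) = (x * y) * ↑(u * w) := by
  push_cast
  calc x * ↑u * (y * ↑w) = x * (↑u * y) * ↑w := by group
    _ = x * (y * ↑u) * ↑w := by rw [center_comm]
    _ = x * y * (↑u * ↑w) := by group

theorem Pprod_mul (hc : ∀ x y z : G, ⁅⁅x,y⁆,z⁆ = 1) :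
    ∀ (m : ℕ) (a : Fin m → G) (x y : Fin m → ℕ),
    Pprod m (fun i => a i ^ x i) * Pprod m (fun i => a i ^ y i)
      = Pprod m (fun i => a i ^ (x i + y i)) *
        ↑(∏ q : Fin m × Fin m,
            (cc hc (a q.2) (a q.1)) ^ (if q.1 < q.2 then x q.2 * y q.1 else 0))
  | 0, a, x, y => by simp [Pprod]
  | m+1, a, x, y => by
    have hC : ∀ i : Fin m,
        cc hc (a (Fin.castSucc i) ^ y (Fin.castSucc i)) (a (Fin.last m) ^ x (Fin.last m))
        = (cc hc (a (Fin.last m)) (a (Fin.castSucc i)) ^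
            (x (Fin.last m) * y (Fin.castSucc i)))⁻¹ := by
      intro i
      rw [cc_pow hc, cc_swap hc, inv_pow, Nat.mul_comm (y (Fin.castSucc i)) (x (Fin.last m))]
    set A := Pprod m (fun i => a (Fin.castSucc i) ^ x (Fin.castSucc i)) with hA
    set B := Pprod m (fun i => a (Fin.castSucc i) ^ y (Fin.castSucc i)) with hB
    set C := ∏ i : Fin m, cc hc (a (Fin.castSucc i) ^ y (Fin.castSucc i))
        (a (Fin.last m) ^ x (Fin.last m)) with hCdef
    have hzB : a (Fin.last m) ^ x (Fin.last m) * B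
        = B * a (Fin.last m) ^ x (Fin.last m) * ((C⁻¹ : Subgroup.center G) : G) := by
      rw [show ((C⁻¹ : Subgroup.center G) : G) = (↑C)⁻¹ from rfl, eq_mul_inv_iff_mul_eq]
      exact (Pprod_swap hc m _ _).symm
    have hT : (∏ q : Fin (m+1) × Fin (m+1),
          cc hc (a q.2) (a q.1) ^ (if q.1 < q.2 then x q.2 * y q.1 else 0))
        = (∏ q : Fin m × Fin m,
            cc hc (a (Fin.castSucc q.2)) (a (Fin.castSucc q.1)) ^
              (if q.1 < q.2 then x (Fin.castSucc q.2) * y (Fin.castSucc q.1) else 0)) *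
          C⁻¹ := by
      have hnl : ∀ j : Fin (m+1), ¬ (Fin.last m < j) := fun j => not_lt.mpr (Fin.le_last j)
      rw [Fintype.prod_prod_type, Fintype.prod_prod_type,
        Fin.prod_univ_castSucc (f := fun i : Fin (m+1) =>
          ∏ j : Fin (m+1), cc hc (a j) (a i) ^ (if i < j then x j * y i else 0))]
      simp only [hnl, if_false, pow_zero, Finset.prod_const_one, mul_one]
      rw [Finset.prod_congr rfl (fun i _ => Fin.prod_univ_castSucc (f := fun j : Fin (m+1) =>
          cc hc (a j) (a (Fin.castSucc i)) ^
            (if (Fin.castSucc i) < j then x j * y (Fin.castSucc i) else 0)))]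
      simp only [Fin.castSucc_lt_castSucc_iff, Fin.castSucc_lt_last, if_true,
        Finset.prod_mul_distrib, hC, Finset.prod_inv_distrib]
      congr 1
      rw [hCdef]
      simp only [hC, Finset.prod_inv_distrib, inv_inv]
    show A * a (Fin.last m) ^ x (Fin.last m) * (B * a (Fin.last m) ^ y (Fin.last m)) = _
    calc A * a (Fin.last m) ^ x (Fin.last m) * (B * a (Fin.last m) ^ y (Fin.last m))
        = A * (a (Fin.last m) ^ x (Fin.last m) * B) * a (Fin.last m) ^ y (Fin.last m) := by
          group
      _ = A * (B * a (Fin.last m) ^ x (Fin.last m) * ((C⁻¹ : Subgroup.center G) : G)) *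
            a (Fin.last m) ^ y (Fin.last m) := by rw [hzB]
      _ = A * B * a (Fin.last m) ^ x (Fin.last m) * ((C⁻¹ : Subgroup.center G) : G) *
            a (Fin.last m) ^ y (Fin.last m) := by group
      _ = A * B * a (Fin.last m) ^ x (Fin.last m) * a (Fin.last m) ^ y (Fin.last m) *
            ((C⁻¹ : Subgroup.center G) : G) := by
          rw [mul_assoc (A * B * a (Fin.last m) ^ x (Fin.last m)), center_comm (C⁻¹),
            ← mul_assoc]
      _ = A * B * a (Fin.last m) ^ (x (Fin.last m) + y (Fin.last m)) *
            ((C⁻¹ : Subgroup.center G) : G) := by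
          rw [mul_assoc (A * B), ← pow_add]
      _ = Pprod m (fun i => a (Fin.castSucc i) ^ (x (Fin.castSucc i) + y (Fin.castSucc i))) *
            ↑(∏ q : Fin m × Fin m, cc hc (a (Fin.castSucc q.2)) (a (Fin.castSucc q.1)) ^
              (if q.1 < q.2 then x (Fin.castSucc q.2) * y (Fin.castSucc q.1) else 0)) *
            a (Fin.last m) ^ (x (Fin.last m) + y (Fin.last m)) *
            ((C⁻¹ : Subgroup.center G) : G) := by
          rw [hA, hB, Pprod_mul hc m (fun i => a (Fin.castSucc i))
            (fun i => x (Fin.castSucc i)) (fun i => y (Fin.castSucc i))]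
      _ = Pprod m (fun i => a (Fin.castSucc i) ^ (x (Fin.castSucc i) + y (Fin.castSucc i))) *
            a (Fin.last m) ^ (x (Fin.last m) + y (Fin.last m)) *
            (↑(∏ q : Fin m × Fin m, cc hc (a (Fin.castSucc q.2)) (a (Fin.castSucc q.1)) ^
              (if q.1 < q.2 then x (Fin.castSucc q.2) * y (Fin.castSucc q.1) else 0)) *
             ((C⁻¹ : Subgroup.center G) : G)) := center_mid _ _ _ _
      _ = Pprod (m+1) (fun i => a i ^ (x i + y i)) *
            ↑(∏ q : Fin (m+1) × Fin (m+1),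
              (cc hc (a q.2) (a q.1)) ^ (if q.1 < q.2 then x q.2 * y q.1 else 0)) := by
          rw [hT]
          push_cast
          rfl

end Class2

section ZPowHelpers
variable {G : Type*} [Group G] {p : ℕ}

theorem pow_mod_exp (x : G) (hx : x ^ p = 1) (m : ℕ) : x ^ (m % p) = x ^ m := by
  conv_rhs => rw [← Nat.div_add_mod m p]
  rw [pow_add, pow_mul, hx, one_pow, one_mul]

theorem pow_val_add [NeZero p] (x : G) (hx : x ^ p = 1) (a b : ZMod p) :
    x ^ (a + b).val = x ^ a.val * x ^ b.val := by
  rw [ZMod.val_add, pow_mod_exp x hx, pow_add]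

theorem pow_val_mul (x : G) (hx : x ^ p = 1) (a b : ZMod p) :
    x ^ (a * b).val = (x ^ a.val) ^ b.val := by
  rw [ZMod.val_mul, pow_mod_exp x hx, pow_mul]

theorem pow_val_neg [NeZero p] (x : G) (hx : x ^ p = 1) (a : ZMod p) :
    x ^ (-a).val = (x ^ a.val)⁻¹ := by
  apply eq_inv_of_mul_eq_one_left
  rw [← pow_val_add x hx, neg_add_cancel, ZMod.val_zero, pow_zero]

end ZPowHelpers

section Main
variable (n p : ℕ)

abbrev GG (k : ℕ) := FreeGroup (Fin n) ⧸ zassenhaus p (FreeGroup (Fin n)) k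

def mkk (k : ℕ) : FreeGroup (Fin n) →* GG n p k := QuotientGroup.mk' _

theorem mkk_ker (k : ℕ) : (mkk n p k).ker = zassenhaus p (FreeGroup (Fin n)) k :=
  QuotientGroup.ker_mk' _

def gg (i : Fin n) : GG n p 3 := mkk n p 3 (FreeGroup.of i)

def gb (i : Fin n) : GG n p 2 := mkk n p 2 (FreeGroup.of i)

theorem three_le_p (hp : p.Prime) (hodd : Odd p) : 3 ≤ p := by
  have h2 := hp.two_le
  have : p ≠ 2 := by
    rintro rfl
    exact (by decide : ¬ Odd 2) hodd
  omega

theorem pow_p_mem_zass3 (hp : p.Prime) (hodd : Odd p) (w : FreeGroup (Fin n)) :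
    w ^ p ∈ zassenhaus p (FreeGroup (Fin n)) 3 := by
  apply Subgroup.subset_closure
  exact ⟨1, 1, le_rfl, by simpa using three_le_p p hp hodd, w, by simp, by simp⟩

theorem G3_exp (hp : p.Prime) (hodd : Odd p) : ∀ x : GG n p 3, x ^ p = 1 := by
  intro x
  induction x using QuotientGroup.induction_on with
  | _ w =>
    show (mkk n p 3 w) ^ p = 1
    rw [← map_pow, ← MonoidHom.mem_ker, mkk_ker]
    exact pow_p_mem_zass3 n p hp hodd w

theorem G3_class : ∀ x y z : GG n p 3, ⁅⁅x,y⁆,z⁆ = 1 := by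
  intro x y z
  induction x using QuotientGroup.induction_on with
  | _ a =>
  induction y using QuotientGroup.induction_on with
  | _ b =>
  induction z using QuotientGroup.induction_on with
  | _ c =>
    show ⁅⁅mkk n p 3 a, mkk n p 3 b⁆, mkk n p 3 c⁆ = 1
    rw [← map_commutatorElement, ← map_commutatorElement, ← MonoidHom.mem_ker, mkk_ker]
    apply Subgroup.subset_closure
    refine ⟨3, 0, by norm_num, by norm_num, ⁅⁅a,b⁆,c⁆, ?_, by simp⟩
    exact Subgroup.commutator_mem_commutator
      (Subgroup.commutator_mem_commutator (Subgroup.mem_top a) (Subgroup.mem_top b))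
      (Subgroup.mem_top c)

theorem G2_comm : ∀ x y : GG n p 2, x * y = y * x := by
  intro x y
  induction x using QuotientGroup.induction_on with
  | _ a =>
  induction y using QuotientGroup.induction_on with
  | _ b =>
    show mkk n p 2 a * mkk n p 2 b = mkk n p 2 b * mkk n p 2 a
    rw [← commutatorElement_eq_one_iff_mul_comm,
      ← map_commutatorElement, ← MonoidHom.mem_ker, mkk_ker]
    apply Subgroup.subset_closure
    exact ⟨2, 0, by norm_num, by norm_num, ⁅a,b⁆, Subgroup.commutator_mem_commutator
      (Subgroup.mem_top a) (Subgroup.mem_top b), by simp⟩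

theorem G2_exp (hp : p.Prime) : ∀ x : GG n p 2, x ^ p = 1 := by
  intro x
  induction x using QuotientGroup.induction_on with
  | _ w =>
    show (mkk n p 2 w) ^ p = 1
    rw [← map_pow, ← MonoidHom.mem_ker, mkk_ker]
    apply Subgroup.subset_closure
    exact ⟨1, 1, le_rfl, by simpa using hp.two_le, w, by simp, by simp⟩

theorem zass3_le_ker {K : Type*} [Group K] (hexp : ∀ x : K, x ^ p = 1)
    (hcl : ∀ x y z : K, ⁅⁅x,y⁆,z⁆ = 1) (F : FreeGroup (Fin n) →* K) :
    zassenhaus p (FreeGroup (Fin n)) 3 ≤ F.ker := by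
  rw [zassenhaus, Subgroup.closure_le]
  rintro x ⟨i, j, hi, hk, y, hy, rfl⟩
  simp only [SetLike.mem_coe, MonoidHom.mem_ker, map_pow]
  cases j with
  | zero =>
    have hi3 : 3 ≤ i := by simpa using hk
    have h1 : y ∈ (⊤ : Subgroup (FreeGroup (Fin n))).lowerCentralSeries 2 :=
      Subgroup.lowerCentralSeries_antitone ⊤ (by omega) hy
    have h2 : F y ∈ (⊤ : Subgroup K).lowerCentralSeries 2 :=
      Subgroup.lowerCentralSeries.map F 2 ⟨y, h1, rfl⟩
    have hbot : (⊤ : Subgroup K).lowerCentralSeries 2 = ⊥ := by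
      apply Subgroup.lowerCentralSeries_succ_eq_bot
      rw [Subgroup.lowerCentralSeries_succ, Subgroup.lowerCentralSeries_zero,
        Subgroup.commutator_def, Subgroup.closure_le]
      rintro x ⟨g1, -, g2, -, rfl⟩
      exact comm_mem_center hcl g1 g2
    rw [hbot, Subgroup.mem_bot] at h2
    simp [h2]
  | succ j' =>
    rw [pow_succ, pow_mul, hexp]

theorem zass2_le_ker {K : Type*} [Group K] (hexp : ∀ x : K, x ^ p = 1)
    (hcomm : ∀ x y : K, x * y = y * x) (F : FreeGroup (Fin n) →* K) :
    zassenhaus p (FreeGroup (Fin n)) 2 ≤ F.ker := by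
  rw [zassenhaus, Subgroup.closure_le]
  rintro x ⟨i, j, hi, hk, y, hy, rfl⟩
  simp only [SetLike.mem_coe, MonoidHom.mem_ker, map_pow]
  cases j with
  | zero =>
    have hi2 : 2 ≤ i := by simpa using hk
    have h1 : y ∈ (⊤ : Subgroup (FreeGroup (Fin n))).lowerCentralSeries 1 :=
      Subgroup.lowerCentralSeries_antitone ⊤ (by omega) hy
    have h2 : F y ∈ (⊤ : Subgroup K).lowerCentralSeries 1 :=
      Subgroup.lowerCentralSeries.map F 1 ⟨y, h1, rfl⟩
    have hbot : (⊤ : Subgroup K).lowerCentralSeries 1 = ⊥ := by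
      rw [Subgroup.lowerCentralSeries_succ, Subgroup.lowerCentralSeries_zero, eq_bot_iff,
        Subgroup.commutator_def, Subgroup.closure_le]
      rintro x ⟨g1, -, g2, -, rfl⟩
      simpa [Subgroup.mem_bot] using commutatorElement_eq_one_iff_mul_comm.mpr
        (hcomm g1 g2)
    rw [hbot, Subgroup.mem_bot] at h2
    simp [h2]
  | succ j' =>
    rw [pow_succ, pow_mul, hexp]

def hf : ZMod p := (2 : ZMod p)⁻¹

theorem two_hf (hp : p.Prime) (hodd : Odd p) : (2 : ZMod p) * hf p = 1 := by
  haveI : Fact p.Prime := ⟨hp⟩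
  apply mul_inv_cancel₀
  have h2 : ¬ (p ∣ 2) := by
    intro h
    have hle := Nat.le_of_dvd (by norm_num) h
    have h2le := hp.two_le
    interval_cases p
    exact (by decide : ¬ Odd 2) hodd
  intro h
  rw [show ((2 : ZMod p)) = ((2 : ℕ) : ZMod p) by push_cast; ring,
    ZMod.natCast_eq_zero_iff] at h
  exact h2 h

def bform (u w : Fin n → ZMod p) : Matrix (Fin n) (Fin n) (ZMod p) :=
  hf p • (Matrix.vecMulVec u w - Matrix.vecMulVec w u)

theorem bform_apply (u w : Fin n → ZMod p) (i j : Fin n) :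
    bform n p u w i j = hf p * (u i * w j - w i * u j) := by
  simp [bform, Matrix.vecMulVec_apply]

end Main

@[ext]
structure Hei (n p : ℕ) where
  v : Fin n → ZMod p
  A : Matrix (Fin n) (Fin n) (ZMod p)

namespace Hei
variable {n p : ℕ}

instance : Mul (Hei n p) := ⟨fun a b => ⟨a.v + b.v, a.A + b.A + bform n p a.v b.v⟩⟩
instance : One (Hei n p) := ⟨⟨0, 0⟩⟩
instance : Inv (Hei n p) := ⟨fun a => ⟨-a.v, -a.A⟩⟩

@[simp] theorem mul_v (a b : Hei n p) : (a * b).v = a.v + b.v := rfl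
@[simp] theorem mul_A (a b : Hei n p) : (a * b).A = a.A + b.A + bform n p a.v b.v := rfl
@[simp] theorem one_v : (1 : Hei n p).v = 0 := rfl
@[simp] theorem one_A : (1 : Hei n p).A = 0 := rfl
@[simp] theorem inv_v (a : Hei n p) : (a⁻¹).v = -a.v := rfl
@[simp] theorem inv_A (a : Hei n p) : (a⁻¹).A = -a.A := rfl

instance : Group (Hei n p) where
  mul_assoc a b c := by
    ext
    · simp [add_assoc]
    · rename_i i j
      simp only [mul_v, mul_A, Matrix.add_apply, bform_apply, Pi.add_apply]
      ring
  one_mul a := by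
    ext
    · simp
    · rename_i i j
      simp [bform_apply]
  mul_one a := by
    ext
    · simp
    · rename_i i j
      simp [bform_apply]
  inv_mul_cancel a := by
    ext
    · simp
    · rename_i i j
      simp [bform_apply]

theorem mk_mul (u w : Fin n → ZMod p) (X Y : Matrix (Fin n) (Fin n) (ZMod p)) :
    (⟨u, X⟩ : Hei n p) * ⟨w, Y⟩ = ⟨u + w, X + Y + bform n p u w⟩ := rfl

end Hei

section Main2
variable (n p : ℕ)

def ggc (i j : Fin n) : Subgroup.center (GG n p 3) :=
  cc (G3_class n p) (gg n p i) (gg n p j)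

theorem center_exp (hp : p.Prime) (hodd : Odd p) (u : Subgroup.center (GG n p 3)) :
    u ^ p = 1 := by
  ext
  push_cast
  exact G3_exp n p hp hodd _

def Phi (X : Matrix (Fin n) (Fin n) (ZMod p)) : Subgroup.center (GG n p 3) :=
  ∏ q : Fin n × Fin n, (ggc n p q.1 q.2) ^ (hf p * X q.1 q.2).val

theorem Phi_zero : Phi n p 0 = 1 := by
  simp [Phi]

theorem Phi_add (hp : p.Prime) (hodd : Odd p) (X Y : Matrix (Fin n) (Fin n) (ZMod p)) :
    Phi n p (X + Y) = Phi n p X * Phi n p Y := by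
  haveI : Fact p.Prime := ⟨hp⟩
  rw [Phi, Phi, Phi, ← Finset.prod_mul_distrib]
  refine Finset.prod_congr rfl fun q _ => ?_
  rw [show hf p * (X + Y) q.1 q.2 = hf p * X q.1 q.2 + hf p * Y q.1 q.2 by
    simp [Matrix.add_apply]; ring]
  exact pow_val_add _ (center_exp n p hp hodd _) _ _

theorem Phi_neg (hp : p.Prime) (hodd : Odd p) (X : Matrix (Fin n) (Fin n) (ZMod p)) :
    Phi n p (-X) = (Phi n p X)⁻¹ := by
  apply eq_inv_of_mul_eq_one_left
  rw [← Phi_add n p hp hodd, neg_add_cancel, Phi_zero]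

theorem Phi_sub (hp : p.Prime) (hodd : Odd p) (X Y : Matrix (Fin n) (Fin n) (ZMod p)) :
    Phi n p (X - Y) = Phi n p X * (Phi n p Y)⁻¹ := by
  rw [sub_eq_add_neg, Phi_add n p hp hodd, Phi_neg n p hp hodd]

theorem Phi_smul (hp : p.Prime) (hodd : Odd p) (a : ZMod p)
    (X : Matrix (Fin n) (Fin n) (ZMod p)) :
    Phi n p (a • X) = (Phi n p X) ^ a.val := by
  rw [Phi, Phi, ← Finset.prod_pow]
  refine Finset.prod_congr rfl fun q _ => ?_
  rw [show hf p * (a • X) q.1 q.2 = (hf p * X q.1 q.2) * a by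
    simp [Matrix.smul_apply]; ring]
  rw [pow_val_mul _ (center_exp n p hp hodd _)]

theorem Phi_symm (hp : p.Prime) (hodd : Odd p) (X : Matrix (Fin n) (Fin n) (ZMod p))
    (hs : ∀ i j, X i j = X j i) : Phi n p X = 1 := by
  have hswap : Phi n p X = (Phi n p X)⁻¹ := by
    calc Phi n p X
        = ∏ q : Fin n × Fin n, (ggc n p q.2 q.1) ^ (hf p * X q.2 q.1).val := by
          rw [Phi]
          exact Fintype.prod_equiv (Equiv.prodComm _ _) _ _ (fun q => rfl)
      _ = ∏ q : Fin n × Fin n, ((ggc n p q.1 q.2) ^ (hf p * X q.1 q.2).val)⁻¹ := by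
          refine Finset.prod_congr rfl fun q _ => ?_
          rw [show ggc n p q.2 q.1 = (ggc n p q.1 q.2)⁻¹ from cc_swap _ _ _,
            hs q.2 q.1, inv_pow]
      _ = (Phi n p X)⁻¹ := by rw [Phi, Finset.prod_inv_distrib]
  have hsq : Phi n p X * Phi n p X = 1 := by
    nth_rewrite 2 [hswap]
    simp
  have hpow : Phi n p X ^ p = 1 := center_exp n p hp hodd _
  obtain ⟨k, hk⟩ := hodd
  have hp1 : Phi n p X ^ (2 * k + 1) = 1 := by rw [← hk]; exact hpow
  calc Phi n p X = (Phi n p X * Phi n p X) ^ k * Phi n p X := by simp [hsq]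
    _ = Phi n p X ^ (2 * k + 1) := by rw [← sq, ← pow_mul, ← pow_succ]
    _ = 1 := hp1

def Bmat (v : Fin n → ZMod p) : Matrix (Fin n) (Fin n) (ZMod p) :=
  Matrix.of fun i j => if i < j then v i * v j else 0

def rho3 (v : Fin n → ZMod p) : GG n p 3 :=
  Pprod n (fun i => gg n p i ^ (v i).val)

theorem rho3_mul (hp : p.Prime) (hodd : Odd p) (v v' : Fin n → ZMod p) :
    rho3 n p v * rho3 n p v' = rho3 n p (v + v') *
      ↑(Phi n p (bform n p v v' + Bmat n p v + Bmat n p v' - Bmat n p (v + v'))) := by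
  haveI : Fact p.Prime := ⟨hp⟩
  have hgp : ∀ i, gg n p i ^ p = 1 := fun i => G3_exp n p hp hodd _
  have h2 := two_hf p hp hodd
  have step1 := Pprod_mul (G3_class n p) n (gg n p)
    (fun i => (v i).val) (fun i => (v' i).val)
  have hmerge : Pprod n (fun i => gg n p i ^ ((v i).val + (v' i).val))
      = rho3 n p (v + v') := by
    rw [rho3]
    congr 1
    funext i
    rw [Pi.add_apply, pow_val_add _ (hgp i), pow_add]
  have hcorr : (∏ q : Fin n × Fin n, (cc (G3_class n p) (gg n p q.2) (gg n p q.1)) ^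
        (if q.1 < q.2 then (v q.2).val * (v' q.1).val else 0))
      = Phi n p (Matrix.of fun i j => if i < j then -(2 * (v j * v' i)) else 0) := by
    refine Finset.prod_congr rfl fun q _ => ?_
    rcases lt_or_ge q.1 q.2 with hlt | hge
    · rw [if_pos hlt, show (Matrix.of fun i j =>
          if i < j then -(2 * (v j * v' i)) else 0) q.1 q.2 = -(2 * (v q.2 * v' q.1)) by
          simp [Matrix.of_apply, hlt],
        show cc (G3_class n p) (gg n p q.2) (gg n p q.1) = (ggc n p q.1 q.2)⁻¹ from
          cc_swap _ _ _,
        show hf p * -(2 * (v q.2 * v' q.1)) = -(v q.2 * v' q.1) by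
          linear_combination (-(v q.2 * v' q.1)) * h2,
        pow_val_neg _ (center_exp n p hp hodd _), inv_pow, ZMod.val_mul,
        pow_mod_exp _ (center_exp n p hp hodd _)]
    · rw [if_neg (not_lt.mpr hge), show (Matrix.of fun i j =>
          if i < j then -(2 * (v j * v' i)) else 0) q.1 q.2 = 0 by
          simp [Matrix.of_apply, not_lt.mpr hge],
        mul_zero, ZMod.val_zero, pow_zero, pow_zero]
  show Pprod n (fun i => gg n p i ^ (v i).val) * Pprod n (fun i => gg n p i ^ (v' i).val)
    = _
  rw [step1, hmerge, hcorr]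
  have hsym : ∀ i j, ((Matrix.of fun i j => if i < j then -(2 * (v j * v' i)) else 0) -
      (bform n p v v' + Bmat n p v + Bmat n p v' - Bmat n p (v + v'))) i j =
      ((Matrix.of fun i j => if i < j then -(2 * (v j * v' i)) else 0) -
      (bform n p v v' + Bmat n p v + Bmat n p v' - Bmat n p (v + v'))) j i := by
    intro i j
    rcases lt_trichotomy i j with h | h | h
    · simp only [Matrix.sub_apply, Matrix.add_apply, Matrix.of_apply, bform_apply,
        Bmat, Pi.add_apply, if_pos h, if_neg (lt_asymm h)]
      linear_combination (v j * v' i - v i * v' j) * h2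
    · subst h; rfl
    · simp only [Matrix.sub_apply, Matrix.add_apply, Matrix.of_apply, bform_apply,
        Bmat, Pi.add_apply, if_pos h, if_neg (lt_asymm h)]
      linear_combination (v j * v' i - v i * v' j) * h2
  have hdiff := Phi_symm n p hp hodd _ hsym
  rw [Phi_sub n p hp hodd, mul_inv_eq_one] at hdiff
  rw [hdiff]

def Psi (hp : p.Prime) (hodd : Odd p) : Hei n p →* GG n p 3 :=
  MonoidHom.mk' (fun h => rho3 n p h.v * ↑(Phi n p (h.A - Bmat n p h.v))) (by
    intro a b
    show rho3 n p (a.v + b.v) *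
        ↑(Phi n p ((a.A + b.A + bform n p a.v b.v) - Bmat n p (a.v + b.v))) = _
    rw [center_mul_mul, rho3_mul n p hp hodd, mul_assoc, ← Subgroup.coe_mul,
      ← Phi_add n p hp hodd, ← Phi_add n p hp hodd]
    congr 3
    abel)

theorem Psi_apply (hp : p.Prime) (hodd : Odd p) (h : Hei n p) :
    Psi n p hp hodd h = rho3 n p h.v * ↑(Phi n p (h.A - Bmat n p h.v)) := rfl

theorem hc2 : ∀ x y z : GG n p 2, ⁅⁅x,y⁆,z⁆ = 1 := by
  intro x y z
  rw [commutatorElement_eq_one_iff_mul_comm.mpr (G2_comm n p x y),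
    commutatorElement_one_left]

def rho2 (v : Fin n → ZMod p) : GG n p 2 :=
  Pprod n (fun i => gb n p i ^ (v i).val)

theorem rho2_mul (hp : p.Prime) (v v' : Fin n → ZMod p) :
    rho2 n p v * rho2 n p v' = rho2 n p (v + v') := by
  haveI : Fact p.Prime := ⟨hp⟩
  have step1 := Pprod_mul (hc2 n p) n (gb n p)
    (fun i => (v i).val) (fun i => (v' i).val)
  have hmerge : Pprod n (fun i => gb n p i ^ ((v i).val + (v' i).val))
      = rho2 n p (v + v') := by
    rw [rho2]
    congr 1
    funext i
    rw [Pi.add_apply, pow_val_add _ (G2_exp n p hp _), pow_add]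
  have hcorr : (∏ q : Fin n × Fin n, (cc (hc2 n p) (gb n p q.2) (gb n p q.1)) ^
        (if q.1 < q.2 then (v q.2).val * (v' q.1).val else 0)) = 1 := by
    apply Finset.prod_eq_one
    intro q _
    have : cc (hc2 n p) (gb n p q.2) (gb n p q.1) = 1 := by
      ext
      show ⁅gb n p q.2, gb n p q.1⁆ = (1 : GG n p 2)
      exact commutatorElement_eq_one_iff_mul_comm.mpr (G2_comm n p _ _)
    rw [this, one_pow]
  show Pprod n (fun i => gb n p i ^ (v i).val) * Pprod n (fun i => gb n p i ^ (v' i).val)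
    = _
  rw [step1, hmerge, hcorr]
  simp

def F2 : FreeGroup (Fin n) →* Multiplicative (Fin n → ZMod p) :=
  FreeGroup.lift (fun k => Multiplicative.ofAdd (Pi.single k 1))

theorem MultV_exp (x : Multiplicative (Fin n → ZMod p)) : x ^ p = 1 := by
  apply Multiplicative.toAdd.injective
  show p • (Multiplicative.toAdd x) = 0
  funext i
  show p • (Multiplicative.toAdd x) i = 0
  rw [nsmul_eq_mul, ZMod.natCast_self, zero_mul]

theorem MultV_comm (x y : Multiplicative (Fin n → ZMod p)) : x * y = y * x :=
  mul_comm x y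

def f2 : GG n p 2 →* Multiplicative (Fin n → ZMod p) :=
  QuotientGroup.lift _ (F2 n p) (zass2_le_ker n p (MultV_exp n p) (MultV_comm n p) (F2 n p))

theorem f2_mk (w : FreeGroup (Fin n)) : f2 n p (mkk n p 2 w) = F2 n p w := rfl

theorem f2_gb (k : Fin n) :
    f2 n p (gb n p k) = Multiplicative.ofAdd (Pi.single k 1) := by
  rw [gb, f2_mk, F2, FreeGroup.lift_apply_of]

theorem rho2_single (hp : p.Prime) (k : Fin n) :
    rho2 n p (Pi.single k 1) = gb n p k := by
  haveI : Fact p.Prime := ⟨hp⟩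
  have : rho2 n p (Pi.single k 1)
      = gb n p k ^ (((Pi.single k 1 : Fin n → ZMod p)) k).val := by
    apply Pprod_eq_single
    intro i hi
    rw [Pi.single_eq_of_ne hi, ZMod.val_zero, pow_zero]
  rw [this, Pi.single_eq_same, ZMod.val_one, pow_one]

theorem rho2_f2 (hp : p.Prime) : ∀ y : GG n p 2,
    rho2 n p (Multiplicative.toAdd (f2 n p y)) = y := by
  have key : (MonoidHom.mk' (fun y : GG n p 2 =>
      rho2 n p (Multiplicative.toAdd (f2 n p y))) (by
        intro a b
        show rho2 n p (Multiplicative.toAdd (f2 n p (a * b))) =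
          rho2 n p (Multiplicative.toAdd (f2 n p a)) *
          rho2 n p (Multiplicative.toAdd (f2 n p b))
        rw [map_mul, toAdd_mul, rho2_mul n p hp])) = MonoidHom.id (GG n p 2) := by
    apply QuotientGroup.monoidHom_ext
    apply FreeGroup.ext_hom
    intro k
    show rho2 n p (Multiplicative.toAdd (f2 n p (gb n p k))) = gb n p k
    rw [f2_gb, toAdd_ofAdd, rho2_single n p hp]
  intro y
  exact DFunLike.congr_fun key y

end Main2

section Main3
open Matrix
variable (n p : ℕ)

theorem conj_vecMulVec (U : Matrix (Fin n) (Fin n) (ZMod p)) (a b : Fin n → ZMod p) :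
    Uᵀ * Matrix.vecMulVec a b * U
      = Matrix.vecMulVec (Matrix.vecMul a U) (Matrix.vecMul b U) := by
  ext i j
  simp only [Matrix.mul_apply, Matrix.vecMulVec_apply, Matrix.transpose_apply,
    Matrix.vecMul, dotProduct, Finset.sum_mul, Finset.mul_sum]
  exact Finset.sum_congr rfl fun k _ => Finset.sum_congr rfl fun l _ => by ring

theorem bform_conj (U : Matrix (Fin n) (Fin n) (ZMod p)) (a b : Fin n → ZMod p) :
    Uᵀ * bform n p a b * U
      = bform n p (Matrix.vecMul a U) (Matrix.vecMul b U) := by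
  rw [bform, bform, Matrix.mul_smul, Matrix.smul_mul, Matrix.mul_sub, Matrix.sub_mul,
    conj_vecMulVec, conj_vecMulVec]

theorem sum_smul_vecMulVec (X U : Matrix (Fin n) (Fin n) (ZMod p)) :
    ∑ q : Fin n × Fin n, (X q.1 q.2) • Matrix.vecMulVec (U q.1) (U q.2)
      = Uᵀ * X * U := by
  ext a b
  rw [Matrix.sum_apply]
  simp only [Matrix.smul_apply, Matrix.vecMulVec_apply, smul_eq_mul,
    Matrix.mul_apply, Matrix.transpose_apply, Finset.sum_mul, Finset.mul_sum]
  rw [Fintype.sum_prod_type, Finset.sum_comm]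
  exact Finset.sum_congr rfl fun k _ => Finset.sum_congr rfl fun l _ => by ring

def Umat (φ : MulAut (GG n p 2)) : Matrix (Fin n) (Fin n) (ZMod p) :=
  Matrix.of fun k i => Multiplicative.toAdd (f2 n p (φ (gb n p k))) i

theorem Umat_row (φ : MulAut (GG n p 2)) (k : Fin n) :
    Umat n p φ k = Multiplicative.toAdd (f2 n p (φ (gb n p k))) := rfl

def Theta (φ : MulAut (GG n p 2)) : Hei n p →* Hei n p :=
  MonoidHom.mk' (fun h => ⟨Matrix.vecMul h.v (Umat n p φ),
    (Umat n p φ)ᵀ * h.A * (Umat n p φ)⟩) (by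
    intro a b
    show (⟨Matrix.vecMul (a.v + b.v) (Umat n p φ),
        (Umat n p φ)ᵀ * (a.A + b.A + bform n p a.v b.v) * (Umat n p φ)⟩ : Hei n p) = _
    rw [Hei.mk_mul]
    ext
    · simp [Matrix.add_vecMul]
    · rename_i i j
      rw [Matrix.mul_add, Matrix.mul_add, Matrix.add_mul, Matrix.add_mul, bform_conj])

theorem Theta_apply (φ : MulAut (GG n p 2)) (h : Hei n p) :
    Theta n p φ h = ⟨Matrix.vecMul h.v (Umat n p φ),
      (Umat n p φ)ᵀ * h.A * (Umat n p φ)⟩ := rfl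

theorem f2_equivariant (φ : MulAut (GG n p 2)) (y : GG n p 2) :
    Matrix.vecMul (Multiplicative.toAdd (f2 n p y)) (Umat n p φ)
      = Multiplicative.toAdd (f2 n p (φ y)) := by
  have key : (MonoidHom.mk' (fun y : GG n p 2 => Multiplicative.ofAdd
      (Matrix.vecMul (Multiplicative.toAdd (f2 n p y)) (Umat n p φ))) (by
        intro a b
        show Multiplicative.ofAdd _ = Multiplicative.ofAdd _ * Multiplicative.ofAdd _
        rw [← ofAdd_add]
        congr 1
        rw [_root_.map_mul, toAdd_mul, Matrix.add_vecMul]))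
      = (f2 n p).comp (MulEquiv.toMonoidHom φ) := by
    apply QuotientGroup.monoidHom_ext
    apply FreeGroup.ext_hom
    intro k
    show Multiplicative.ofAdd
        (Matrix.vecMul (Multiplicative.toAdd (f2 n p (gb n p k))) (Umat n p φ))
      = f2 n p (φ (gb n p k))
    rw [f2_gb, toAdd_ofAdd, Matrix.single_one_vecMul]
    rfl
  have h := DFunLike.congr_fun key y
  simpa using congrArg Multiplicative.toAdd h

/-- the canonical word with given exponent vector, in `Hei` -/
def Qword (v : Fin n → ZMod p) : Hei n p :=
  Pprod n (fun k => (⟨Pi.single k 1, 0⟩ : Hei n p) ^ (v k).val)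

theorem bform_self_smul (m : ℕ) (u : Fin n → ZMod p) : bform n p (m • u) u = 0 := by
  ext i j
  rw [bform_apply]
  simp only [Pi.smul_apply, nsmul_eq_mul, Matrix.zero_apply]
  ring

def Hpr1 : Hei n p →* Multiplicative (Fin n → ZMod p) :=
  MonoidHom.mk' (fun h => Multiplicative.ofAdd h.v) (by
    intro a b
    rw [← ofAdd_add]
    rfl)

theorem Hei_pow (u : Fin n → ZMod p) (m : ℕ) :
    (⟨u, 0⟩ : Hei n p) ^ m = ⟨m • u, 0⟩ := by
  induction m with
  | zero =>
    rw [pow_zero]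
    ext
    · simp
    · simp
  | succ k ih =>
    rw [pow_succ, ih, Hei.mk_mul, bform_self_smul]
    ext
    · rename_i i
      show (k • u) i + u i = ((k+1) • u) i
      simp only [Pi.smul_apply, nsmul_eq_mul, Nat.cast_add, Nat.cast_one]
      ring
    · simp

theorem Qword_v (hp : p.Prime) (v : Fin n → ZMod p) : (Qword n p v).v = v := by
  haveI : Fact p.Prime := ⟨hp⟩
  have : ∀ k, (⟨Pi.single k 1, 0⟩ : Hei n p) ^ (v k).val
      = ⟨Pi.single k (v k), 0⟩ := by
    intro k
    rw [Hei_pow]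
    congr 1
    funext i
    rcases eq_or_ne i k with rfl | hik
    · simp [Pi.single_eq_same, nsmul_eq_mul, ZMod.natCast_val, ZMod.cast_id]
    · simp [Pi.single_eq_of_ne hik]
  have hq : Hpr1 n p (Qword n p v) = Multiplicative.ofAdd v := by
    rw [Qword, Pprod_hom]
    have h2 : (fun k => Hpr1 n p ((⟨Pi.single k 1, 0⟩ : Hei n p) ^ (v k).val))
        = fun k => Multiplicative.ofAdd (Pi.single k (v k)) := by
      funext k
      rw [this k]
      rfl
    rw [h2, Pprod_ofAdd, Finset.univ_sum_single]
  exact congrArg Multiplicative.toAdd hq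

theorem Hei_hom_ext (hp : p.Prime) {K : Type*} [Group K] (f g : Hei n p →* K)
    (h1 : ∀ k : Fin n, f ⟨Pi.single k 1, 0⟩ = g ⟨Pi.single k 1, 0⟩)
    (h2 : ∀ X, f ⟨0, X⟩ = g ⟨0, X⟩) : f = g := by
  ext h
  obtain ⟨v, A⟩ := h
  have hQ : f (Qword n p v) = g (Qword n p v) := by
    rw [Qword, Pprod_hom, Pprod_hom]
    congr 1
    funext k
    rw [_root_.map_pow, _root_.map_pow, h1]
  have hsplit : (⟨v, A⟩ : Hei n p) = Qword n p v * ⟨0, A - (Qword n p v).A⟩ := by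
    have hv := Qword_v n p hp v
    ext
    · rename_i i
      show v i = ((Qword n p v).v + 0) i
      rw [hv]
      simp
    · rename_i i j
      show A i j = ((Qword n p v).A + (A - (Qword n p v).A) +
        bform n p (Qword n p v).v 0) i j
      rw [show bform n p (Qword n p v).v 0 = 0 by ext a b; rw [bform_apply]; simp]
      simp
  rw [hsplit, _root_.map_mul, _root_.map_mul, hQ, h2]

theorem Bmat_zero : Bmat n p 0 = 0 := by
  ext i j
  simp [Bmat]

theorem Bmat_single (k : Fin n) : Bmat n p (Pi.single k 1) = 0 := by
  ext i j
  simp only [Bmat, Matrix.of_apply, Matrix.zero_apply]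
  split_ifs with h
  · rcases eq_or_ne i k with rfl | hik
    · rw [Pi.single_eq_of_ne h.ne', mul_zero]
    · rw [Pi.single_eq_of_ne hik, zero_mul]
  · rfl

theorem rho3_zero : rho3 n p 0 = 1 :=
  Pprod_eq_one _ _ (fun i => by simp)

theorem rho3_single (hp : p.Prime) (k : Fin n) :
    rho3 n p (Pi.single k 1) = gg n p k := by
  haveI : Fact p.Prime := ⟨hp⟩
  have : rho3 n p (Pi.single k 1)
      = gg n p k ^ (((Pi.single k 1 : Fin n → ZMod p)) k).val := by
    apply Pprod_eq_single
    intro i hi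
    rw [Pi.single_eq_of_ne hi, ZMod.val_zero, pow_zero]
  rw [this, Pi.single_eq_same, ZMod.val_one, pow_one]

theorem Psi_single (hp : p.Prime) (hodd : Odd p) (k : Fin n) :
    Psi n p hp hodd ⟨Pi.single k 1, 0⟩ = gg n p k := by
  rw [Psi_apply]
  show rho3 n p (Pi.single k 1) * ↑(Phi n p (0 - Bmat n p (Pi.single k 1))) = _
  rw [Bmat_single, sub_zero, Phi_zero, rho3_single n p hp]
  simp

theorem Psi_matrix (hp : p.Prime) (hodd : Odd p) (X : Matrix (Fin n) (Fin n) (ZMod p)) :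
    Psi n p hp hodd ⟨0, X⟩ = ↑(Phi n p X) := by
  rw [Psi_apply]
  show rho3 n p 0 * ↑(Phi n p (X - Bmat n p 0)) = _
  rw [Bmat_zero, sub_zero, rho3_zero, one_mul]

theorem Hei_comm (hp : p.Prime) (hodd : Odd p) (u w : Fin n → ZMod p) :
    ⁅(⟨u, 0⟩ : Hei n p), (⟨w, 0⟩ : Hei n p)⁆
      = (⟨0, Matrix.vecMulVec u w - Matrix.vecMulVec w u⟩ : Hei n p) := by
  have h2 := two_hf p hp hodd
  rw [commutatorElement_def]
  ext
  · rename_i i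
    simp only [Hei.mul_v, Hei.inv_v, Pi.add_apply, Pi.neg_apply, Pi.zero_apply]
    ring
  · rename_i i j
    simp only [Hei.mul_A, Hei.mul_v, Hei.inv_A, Hei.inv_v, Matrix.add_apply,
      Matrix.neg_apply, Matrix.sub_apply, Matrix.zero_apply, bform_apply,
      Matrix.vecMulVec_apply, Pi.add_apply, Pi.neg_apply]
    linear_combination (u i * w j - w i * u j) * h2

theorem Phi_sum (hp : p.Prime) (hodd : Odd p) {ι : Type*} [DecidableEq ι] (s : Finset ι)
    (M : ι → Matrix (Fin n) (Fin n) (ZMod p)) :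
    Phi n p (∑ i ∈ s, M i) = ∏ i ∈ s, Phi n p (M i) := by
  induction s using Finset.induction_on with
  | empty => simp [Phi_zero]
  | insert _ _ h ih => rw [Finset.sum_insert h, Finset.prod_insert h, Phi_add n p hp hodd, ih]

def shat (hp : p.Prime) (hodd : Odd p) (φ : MulAut (GG n p 2)) :
    GG n p 3 →* GG n p 3 :=
  QuotientGroup.lift _ (FreeGroup.lift (fun k => Psi n p hp hodd ⟨Umat n p φ k, 0⟩))
    (zass3_le_ker n p (G3_exp n p hp hodd) (G3_class n p) _)

theorem shat_mk (hp : p.Prime) (hodd : Odd p) (φ : MulAut (GG n p 2))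
    (w : FreeGroup (Fin n)) :
    shat n p hp hodd φ (mkk n p 3 w)
      = FreeGroup.lift (fun k => Psi n p hp hodd ⟨Umat n p φ k, 0⟩) w := rfl

theorem shat_gg (hp : p.Prime) (hodd : Odd p) (φ : MulAut (GG n p 2)) (k : Fin n) :
    shat n p hp hodd φ (gg n p k) = Psi n p hp hodd ⟨Umat n p φ k, 0⟩ := by
  rw [gg, shat_mk, FreeGroup.lift_apply_of]

theorem map_coe_center_prod {G G' : Type*} [Group G] [Group G'] (F : G →* G')
    {ι : Type*} (s : Finset ι) (u : ι → Subgroup.center G) (w : ι → Subgroup.center G')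
    (h : ∀ i ∈ s, F ↑(u i) = ↑(w i)) :
    F ↑(∏ i ∈ s, u i) = ↑(∏ i ∈ s, w i) := by
  classical
  induction s using Finset.induction_on with
  | empty => simp
  | insert _ _ hi ih =>
    rename_i a t
    rw [Finset.prod_insert hi, Finset.prod_insert hi]
    push_cast
    rw [_root_.map_mul, h a (Finset.mem_insert_self a t),
      ih (fun i hit => h i (Finset.mem_insert_of_mem hit))]

theorem shat_Psi (hp : p.Prime) (hodd : Odd p) (φ : MulAut (GG n p 2)) :
    (shat n p hp hodd φ).comp (Psi n p hp hodd)
      = (Psi n p hp hodd).comp (Theta n p φ) := by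
  have h2 := two_hf p hp hodd
  apply Hei_hom_ext n p hp
  · intro k
    simp only [MonoidHom.comp_apply]
    rw [Psi_single n p hp hodd k, shat_gg, Theta_apply]
    congr 1
    rw [Hei.mk.injEq]
    exact ⟨(Matrix.single_one_vecMul k (Umat n p φ)).symm,
      by rw [Matrix.mul_zero, Matrix.zero_mul]⟩
  · intro X
    simp only [MonoidHom.comp_apply]
    rw [Psi_matrix n p hp hodd, Theta_apply]
    show _ = Psi n p hp hodd ⟨Matrix.vecMul 0 (Umat n p φ),
      (Umat n p φ)ᵀ * X * (Umat n p φ)⟩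
    rw [Matrix.zero_vecMul, Psi_matrix n p hp hodd, Phi, Phi]
    rw [map_coe_center_prod (shat n p hp hodd φ) Finset.univ _
      (fun q : Fin n × Fin n => Phi n p ((hf p * X q.1 q.2) •
        (Matrix.vecMulVec (Umat n p φ q.1) (Umat n p φ q.2)
          - Matrix.vecMulVec (Umat n p φ q.2) (Umat n p φ q.1))))
      (fun q _ => by
        show shat n p hp hodd φ (⁅gg n p q.1, gg n p q.2⁆ ^ (hf p * X q.1 q.2).val)
          = ↑(Phi n p ((hf p * X q.1 q.2) •
            (Matrix.vecMulVec (Umat n p φ q.1) (Umat n p φ q.2)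
              - Matrix.vecMulVec (Umat n p φ q.2) (Umat n p φ q.1))))
        rw [_root_.map_pow, map_commutatorElement, shat_gg, shat_gg,
          ← map_commutatorElement, Hei_comm n p hp hodd, Psi_matrix n p hp hodd,
          Phi_smul n p hp hodd]
        push_cast
        rfl)]
    rw [← Phi_sum n p hp hodd]
    congr 1
    have e1 : (∑ q : Fin n × Fin n, (hf p * X q.1 q.2) •
        Matrix.vecMulVec (Umat n p φ q.1) (Umat n p φ q.2))
        = hf p • ((Umat n p φ)ᵀ * X * (Umat n p φ)) := by
      calc (∑ q : Fin n × Fin n, (hf p * X q.1 q.2) •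
          Matrix.vecMulVec (Umat n p φ q.1) (Umat n p φ q.2))
          = ∑ q : Fin n × Fin n, ((hf p • X) q.1 q.2) •
            Matrix.vecMulVec (Umat n p φ q.1) (Umat n p φ q.2) := by
            refine Finset.sum_congr rfl fun q _ => by
              rw [Matrix.smul_apply, smul_eq_mul]
        _ = (Umat n p φ)ᵀ * (hf p • X) * (Umat n p φ) :=
            sum_smul_vecMulVec n p _ _
        _ = hf p • ((Umat n p φ)ᵀ * X * (Umat n p φ)) := by
            rw [Matrix.mul_smul, Matrix.smul_mul]
    have e2 : (∑ q : Fin n × Fin n, (hf p * X q.1 q.2) •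
        Matrix.vecMulVec (Umat n p φ q.2) (Umat n p φ q.1))
        = hf p • ((Umat n p φ)ᵀ * Xᵀ * (Umat n p φ)) := by
      calc (∑ q : Fin n × Fin n, (hf p * X q.1 q.2) •
          Matrix.vecMulVec (Umat n p φ q.2) (Umat n p φ q.1))
          = ∑ q : Fin n × Fin n, ((hf p • Xᵀ) q.1 q.2) •
            Matrix.vecMulVec (Umat n p φ q.1) (Umat n p φ q.2) := by
            refine Fintype.sum_equiv (Equiv.prodComm _ _) _ _ fun q => by
              rw [Matrix.smul_apply, smul_eq_mul, Matrix.transpose_apply]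
              rfl
        _ = (Umat n p φ)ᵀ * (hf p • Xᵀ) * (Umat n p φ) :=
            sum_smul_vecMulVec n p _ _
        _ = hf p • ((Umat n p φ)ᵀ * Xᵀ * (Umat n p φ)) := by
            rw [Matrix.mul_smul, Matrix.smul_mul]
    have hsum : (∑ q : Fin n × Fin n, (hf p * X q.1 q.2) •
        (Matrix.vecMulVec (Umat n p φ q.1) (Umat n p φ q.2)
          - Matrix.vecMulVec (Umat n p φ q.2) (Umat n p φ q.1)))
        = hf p • ((Umat n p φ)ᵀ * X * (Umat n p φ))
          - hf p • ((Umat n p φ)ᵀ * Xᵀ * (Umat n p φ)) := by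
      rw [← e1, ← e2, ← Finset.sum_sub_distrib]
      exact Finset.sum_congr rfl fun q _ => smul_sub _ _ _
    rw [hsum]
    have hN : ∀ i j, ((Umat n p φ)ᵀ * Xᵀ * (Umat n p φ)) i j
        = ((Umat n p φ)ᵀ * X * (Umat n p φ)) j i := by
      intro i j
      rw [show (Umat n p φ)ᵀ * Xᵀ * (Umat n p φ)
          = ((Umat n p φ)ᵀ * X * (Umat n p φ))ᵀ by
        rw [Matrix.transpose_mul, Matrix.transpose_mul, Matrix.transpose_transpose,
          Matrix.mul_assoc]]
      rfl
    have hsym : ∀ i j, ((hf p • ((Umat n p φ)ᵀ * X * (Umat n p φ))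
          - hf p • ((Umat n p φ)ᵀ * Xᵀ * (Umat n p φ)))
          - (Umat n p φ)ᵀ * X * (Umat n p φ)) i j
        = ((hf p • ((Umat n p φ)ᵀ * X * (Umat n p φ))
          - hf p • ((Umat n p φ)ᵀ * Xᵀ * (Umat n p φ)))
          - (Umat n p φ)ᵀ * X * (Umat n p φ)) j i := by
      intro i j
      simp only [Matrix.sub_apply, Matrix.smul_apply, smul_eq_mul, hN]
      linear_combination (((Umat n p φ)ᵀ * X * (Umat n p φ)) i j
        - ((Umat n p φ)ᵀ * X * (Umat n p φ)) j i) * h2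
    have hdiff := Phi_symm n p hp hodd _ hsym
    rw [Phi_sub n p hp hodd, mul_inv_eq_one] at hdiff
    exact hdiff

theorem shat_comp (hp : p.Prime) (hodd : Odd p) (φ ψ : MulAut (GG n p 2)) :
    shat n p hp hodd (φ * ψ) = (shat n p hp hodd φ).comp (shat n p hp hodd ψ) := by
  apply QuotientGroup.monoidHom_ext
  apply FreeGroup.ext_hom
  intro k
  show shat n p hp hodd (φ * ψ) (gg n p k)
    = shat n p hp hodd φ (shat n p hp hodd ψ (gg n p k))
  have he := DFunLike.congr_fun (shat_Psi n p hp hodd φ) (⟨Umat n p ψ k, 0⟩ : Hei n p)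
  simp only [MonoidHom.comp_apply] at he
  rw [shat_gg, shat_gg, he, Theta_apply]
  congr 1
  rw [Hei.mk.injEq]
  constructor
  · show Umat n p (φ * ψ) k = Matrix.vecMul (Umat n p ψ k) (Umat n p φ)
    rw [Umat_row, Umat_row, f2_equivariant n p φ (ψ (gb n p k))]
    rfl
  · rw [Matrix.mul_zero, Matrix.zero_mul]

theorem shat_one (hp : p.Prime) (hodd : Odd p) :
    shat n p hp hodd 1 = MonoidHom.id _ := by
  apply QuotientGroup.monoidHom_ext
  apply FreeGroup.ext_hom
  intro k
  show shat n p hp hodd 1 (gg n p k) = gg n p k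
  rw [shat_gg, show Umat n p 1 k = Pi.single k 1 by
    funext i
    show Multiplicative.toAdd (f2 n p ((1 : MulAut (GG n p 2)) (gb n p k))) i = _
    rw [show ((1 : MulAut (GG n p 2)) (gb n p k)) = gb n p k from rfl, f2_gb]
    rfl]
  exact Psi_single n p hp hodd k

def sAut (hp : p.Prime) (hodd : Odd p) (φ : MulAut (GG n p 2)) : MulAut (GG n p 3) where
  toFun := shat n p hp hodd φ
  invFun := shat n p hp hodd φ⁻¹
  left_inv := fun x => by
    have h : (shat n p hp hodd φ⁻¹).comp (shat n p hp hodd φ) = MonoidHom.id _ := by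
      rw [← shat_comp n p hp hodd, inv_mul_cancel, shat_one n p hp hodd]
    exact DFunLike.congr_fun h x
  right_inv := fun x => by
    have h : (shat n p hp hodd φ).comp (shat n p hp hodd φ⁻¹) = MonoidHom.id _ := by
      rw [← shat_comp n p hp hodd, mul_inv_cancel, shat_one n p hp hodd]
    exact DFunLike.congr_fun h x
  map_mul' := (shat n p hp hodd φ).map_mul

theorem proj_mk (hle : (2:ℕ) ≤ 3) (w : FreeGroup (Fin n)) :
    zassenhausProj p (FreeGroup (Fin n)) 2 3 hle (mkk n p 3 w) = mkk n p 2 w := rfl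

theorem proj_Psi (hp : p.Prime) (hodd : Odd p) (hle : (2:ℕ) ≤ 3) (h : Hei n p) :
    zassenhausProj p (FreeGroup (Fin n)) 2 3 hle (Psi n p hp hodd h)
      = rho2 n p h.v := by
  rw [Psi_apply, _root_.map_mul]
  have h1 : zassenhausProj p (FreeGroup (Fin n)) 2 3 hle (rho3 n p h.v)
      = rho2 n p h.v := by
    rw [rho3, Pprod_hom, rho2]
    congr 1
  have h2 : zassenhausProj p (FreeGroup (Fin n)) 2 3 hle
      ↑(Phi n p (h.A - Bmat n p h.v)) = 1 := by
    rw [Phi, map_coe_center_prod (zassenhausProj p (FreeGroup (Fin n)) 2 3 hle)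
      Finset.univ _ (fun _ => (1 : Subgroup.center (GG n p 2)))
      (fun q _ => by
        show zassenhausProj p (FreeGroup (Fin n)) 2 3 hle
          (⁅gg n p q.1, gg n p q.2⁆ ^ (hf p * (h.A - Bmat n p h.v) q.1 q.2).val) = _
        rw [_root_.map_pow, map_commutatorElement,
          show zassenhausProj p (FreeGroup (Fin n)) 2 3 hle (gg n p q.1)
            = gb n p q.1 from rfl,
          show zassenhausProj p (FreeGroup (Fin n)) 2 3 hle (gg n p q.2)
            = gb n p q.2 from rfl,
          commutatorElement_eq_one_iff_mul_comm.mpr (G2_comm n p _ _), one_pow]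
        rfl)]
    simp
  rw [h1, h2, mul_one]

end Main3

theorem zassenhaus_aut_extension_splits (n p : ℕ) (hp : p.Prime) (hodd : Odd p) :
    ∃ s : MulAut (FreeGroup (Fin n) ⧸ zassenhaus p (FreeGroup (Fin n)) 2) →*
        MulAut (FreeGroup (Fin n) ⧸ zassenhaus p (FreeGroup (Fin n)) 3),
      ∀ φ x, zassenhausProj p (FreeGroup (Fin n)) 2 3 (Nat.le_succ _) (s φ x) =
        φ (zassenhausProj p (FreeGroup (Fin n)) 2 3 (Nat.le_succ _) x) := by
  refine ⟨MonoidHom.mk' (fun φ => sAut n p hp hodd φ) ?_, ?_⟩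
  · intro φ ψ
    apply MulEquiv.ext
    intro x
    show shat n p hp hodd (φ * ψ) x = shat n p hp hodd φ (shat n p hp hodd ψ x)
    rw [shat_comp n p hp hodd]
    rfl
  · intro φ x
    have key : (zassenhausProj p (FreeGroup (Fin n)) 2 3 (Nat.le_succ _)).comp
        (shat n p hp hodd φ) = (MulEquiv.toMonoidHom φ).comp
          (zassenhausProj p (FreeGroup (Fin n)) 2 3 (Nat.le_succ _)) := by
      apply QuotientGroup.monoidHom_ext
      apply FreeGroup.ext_hom
      intro k
      show zassenhausProj p (FreeGroup (Fin n)) 2 3 (Nat.le_succ _)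
          (shat n p hp hodd φ (gg n p k))
        = φ (zassenhausProj p (FreeGroup (Fin n)) 2 3 (Nat.le_succ _) (gg n p k))
      rw [shat_gg, proj_Psi n p hp hodd,
        show zassenhausProj p (FreeGroup (Fin n)) 2 3 (Nat.le_succ _) (gg n p k)
          = gb n p k from rfl]
      show rho2 n p (Umat n p φ k) = φ (gb n p k)
      rw [Umat_row, rho2_f2 n p hp]
    exact DFunLike.congr_fun key x
end

section
/- Let g ≥ 4 and let A be an abelian group. Let H = ℤ^{2g} with standard basis a_1,…,a_g,b_1,…,b_g, and for G ∈ GL_g(ℤ) let φ_G be the automorphism of H given by the block-diagonal matrix diag(G, ᵗG⁻¹), acting by G on the span of a_1,…,a_g and by the inverse transpose ᵗG⁻¹ on the span of b_1,…,b_g. If f : ⋀³H → A is a homomorphism of abelian groups such that f ∘ ⋀³φ_G = f for every G ∈ GL_g(ℤ), then f = 0. -/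
open Matrix

theorem exteriorPower_map_mem {R : Type*} [CommRing R] {M N : Type*} [AddCommGroup M]
    [Module R M] [AddCommGroup N] [Module R N] (f : M →ₗ[R] N) (n : ℕ)
    {x : ExteriorAlgebra R M} (hx : x ∈ ⋀[R]^n M) :
    ExteriorAlgebra.map f x ∈ ⋀[R]^n N := by
  have h1 : Submodule.map (ExteriorAlgebra.map f).toLinearMap (⋀[R]^n M) ≤ ⋀[R]^n N := by
    rw [ExteriorAlgebra.exteriorPower, ExteriorAlgebra.exteriorPower, Submodule.map_pow, ExteriorAlgebra.ι_range_map_map]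
    refine pow_le_pow_left' ?_ n
    rw [LinearMap.range_eq_map (ExteriorAlgebra.ι R)]
    exact Submodule.map_mono le_top
  exact h1 ⟨x, hx, rfl⟩

/-- The linear map `⋀[R]^n M →ₗ[R] ⋀[R]^n N` induced by a linear map `f : M →ₗ[R] N`. -/
noncomputable def extPowerMap {R : Type*} [CommRing R] {M N : Type*} [AddCommGroup M]
    [Module R M] [AddCommGroup N] [Module R N] (n : ℕ) (f : M →ₗ[R] N) :
    (⋀[R]^n M) →ₗ[R] (⋀[R]^n N) :=
  (ExteriorAlgebra.map f).toLinearMap.restrict fun _ hx => exteriorPower_map_mem f n hx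

/-- For `G ∈ GL_g(ℤ)`, the automorphism of `H = ℤ^g × ℤ^g` given by the block-diagonal
matrix `diag(G, ᵗG⁻¹)`: it acts by `G` on the first factor (the span of `a_1, …, a_g`)
and by the inverse transpose `ᵗG⁻¹` on the second factor (the span of `b_1, …, b_g`). -/
noncomputable def phiGL (g : ℕ) (G : GL (Fin g) ℤ) :
    ((Fin g → ℤ) × (Fin g → ℤ)) →ₗ[ℤ] ((Fin g → ℤ) × (Fin g → ℤ)) :=
  LinearMap.prodMap (Matrix.toLin' (G : Matrix (Fin g) (Fin g) ℤ))
    (Matrix.toLin' ((↑(G⁻¹) : Matrix (Fin g) (Fin g) ℤ)ᵀ))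

/-! ### Auxiliary material -/

section Aux1

variable {R : Type*} [CommRing R] {M N : Type*} [AddCommGroup M] [Module R M]
  [AddCommGroup N] [Module R N]

/-- `ιMulti` into the exterior power submodule. -/
noncomputable def ιMultiP (n : ℕ) : M [⋀^Fin n]→ₗ[R] (⋀[R]^n M) :=
  (ExteriorAlgebra.ιMulti R n).codRestrict (⋀[R]^n M) fun v =>
    ExteriorAlgebra.ιMulti_range R n (Set.mem_range_self v)

lemma ιMultiP_span (n : ℕ) :
    Submodule.span R (Set.range (ιMultiP (R := R) (M := M) n)) = ⊤ := by
  apply Submodule.map_injective_of_injective (Submodule.injective_subtype (⋀[R]^n M))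
  rw [Submodule.map_span, Submodule.map_top, Submodule.range_subtype, ← Set.range_comp]
  have : (⋀[R]^n M).subtype ∘ (ιMultiP (R := R) (M := M) n) = ExteriorAlgebra.ιMulti R n := rfl
  rw [this, ExteriorAlgebra.ιMulti_span_fixedDegree]

lemma extPowerMap_ιMultiP (n : ℕ) (φ : M →ₗ[R] N) (v : Fin n → M) :
    extPowerMap n φ (ιMultiP n v) = ιMultiP n (φ ∘ v) := by
  apply Subtype.ext
  show ExteriorAlgebra.map φ (ExteriorAlgebra.ιMulti R n v) = ExteriorAlgebra.ιMulti R n (φ ∘ v)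
  exact ExteriorAlgebra.map_apply_ιMulti φ v

end Aux1

section Tri

variable {R : Type*} [CommRing R] {M A : Type*} [AddCommGroup M] [Module R M]
  [AddCommGroup A] [Module R A] (F : M [⋀^Fin 3]→ₗ[R] A)

private lemma upd0 {α : Type*} (x y z v : α) : Function.update ![x, y, z] 0 v = ![v, y, z] := by
  ext k; fin_cases k <;> simp
private lemma upd1 {α : Type*} (x y z v : α) : Function.update ![x, y, z] 1 v = ![x, v, z] := by
  ext k; fin_cases k <;> simp
private lemma upd2 {α : Type*} (x y z v : α) : Function.update ![x, y, z] 2 v = ![x, y, v] := by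
  ext k; fin_cases k <;> simp

lemma tri_add0 (x x' y z : M) : F ![x + x', y, z] = F ![x, y, z] + F ![x', y, z] := by
  have := F.map_update_add ![x, y, z] 0 x x'
  simpa only [upd0] using this

lemma tri_sub0 (x x' y z : M) : F ![x - x', y, z] = F ![x, y, z] - F ![x', y, z] := by
  have := F.map_update_sub ![x, y, z] 0 x x'
  simpa only [upd0] using this

lemma tri_sub1 (x y y' z : M) : F ![x, y - y', z] = F ![x, y, z] - F ![x, y', z] := by
  have := F.map_update_sub ![x, y, z] 1 y y'
  simpa only [upd1] using this

lemma tri_swap01 (x y z : M) : F ![y, x, z] = -F ![x, y, z] := by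
  have h : (![x, y, z] ∘ Equiv.swap (0 : Fin 3) 1) = ![y, x, z] := by
    ext k; fin_cases k <;> simp [Equiv.swap_apply_def]
  rw [← h]; exact F.map_swap _ (by decide)

lemma tri_swap12 (x y z : M) : F ![x, z, y] = -F ![x, y, z] := by
  have h : (![x, y, z] ∘ Equiv.swap (1 : Fin 3) 2) = ![x, z, y] := by
    ext k; fin_cases k <;> simp [Equiv.swap_apply_def]
  rw [← h]; exact F.map_swap _ (by decide)

lemma tri_swap02 (x y z : M) : F ![z, y, x] = -F ![x, y, z] := by
  have h : (![x, y, z] ∘ Equiv.swap (0 : Fin 3) 2) = ![z, y, x] := by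
    ext k; fin_cases k <;> simp [Equiv.swap_apply_def]
  rw [← h]; exact F.map_swap _ (by decide)

lemma tri_eq01 (x z : M) : F ![x, x, z] = 0 :=
  F.map_eq_zero_of_eq ![x, x, z] (i := 0) (j := 1) rfl (by decide)

lemma tri_eq12 (x z : M) : F ![z, x, x] = 0 :=
  F.map_eq_zero_of_eq ![z, x, x] (i := 1) (j := 2) rfl (by decide)

end Tri

section Transv

variable {g : ℕ}

/-- The transvection `1 + E_{ij}` as an element of `GL g ℤ`. -/
noncomputable def transvGL (i j : Fin g) (hij : i ≠ j) : GL (Fin g) ℤ :=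
  ⟨Matrix.transvection i j 1, Matrix.transvection i j (-1),
   by rw [Matrix.transvection_mul_transvection_same i j hij]
      norm_num [Matrix.transvection_zero],
   by rw [Matrix.transvection_mul_transvection_same i j hij]
      norm_num [Matrix.transvection_zero]⟩

def aV (g : ℕ) (q : Fin g) : (Fin g → ℤ) × (Fin g → ℤ) := (Pi.single q 1, 0)
def bV (g : ℕ) (q : Fin g) : (Fin g → ℤ) × (Fin g → ℤ) := (0, Pi.single q 1)

lemma transvGL_coe (i j : Fin g) (hij : i ≠ j) :
    ((transvGL i j hij : GL (Fin g) ℤ) : Matrix (Fin g) (Fin g) ℤ)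
      = Matrix.transvection i j 1 := rfl

lemma transvGL_inv_coe (i j : Fin g) (hij : i ≠ j) :
    (((transvGL i j hij)⁻¹ : GL (Fin g) ℤ) : Matrix (Fin g) (Fin g) ℤ)
      = Matrix.transvection i j (-1) := rfl

lemma phiGL_aV (G : GL (Fin g) ℤ) (q : Fin g) :
    phiGL g G (aV g q) = ((fun p => (G : Matrix (Fin g) (Fin g) ℤ) p q), 0) := by
  simp [phiGL, aV, Matrix.toLin'_apply]; rfl

lemma phiGL_bV (G : GL (Fin g) ℤ) (q : Fin g) :
    phiGL g G (bV g q) = (0, (fun p => ((G⁻¹ : GL (Fin g) ℤ) : Matrix (Fin g) (Fin g) ℤ) q p)) := by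
  simp [phiGL, bV, Matrix.toLin'_apply]; rfl

lemma phiT_a_ne (i j : Fin g) (hij : i ≠ j) (q : Fin g) (hq : q ≠ j) :
    phiGL g (transvGL i j hij) (aV g q) = aV g q := by
  rw [phiGL_aV, transvGL_coe, aV]
  congr 1
  funext p
  simp [Matrix.transvection, Matrix.one_apply, Matrix.single, Pi.single_apply, hq]
  exact fun _ => Ne.symm hq

lemma phiT_a_j (i j : Fin g) (hij : i ≠ j) :
    phiGL g (transvGL i j hij) (aV g j) = aV g j + aV g i := by
  rw [phiGL_aV, transvGL_coe, aV, aV]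
  refine Prod.ext ?_ (by simp)
  funext p
  simp [Matrix.transvection, Matrix.one_apply, Matrix.single, Pi.single_apply]
  by_cases h : p = i
  · simp [h]
  · simp [h, Ne.symm h]

lemma phiT_b_ne (i j : Fin g) (hij : i ≠ j) (q : Fin g) (hq : q ≠ i) :
    phiGL g (transvGL i j hij) (bV g q) = bV g q := by
  rw [phiGL_bV, transvGL_inv_coe, bV]
  congr 1
  funext p
  simp [Matrix.transvection, Matrix.one_apply, Matrix.single, Pi.single_apply, hq]
  by_cases h : p = q <;> simp_all [eq_comm]

lemma phiT_b_i (i j : Fin g) (hij : i ≠ j) :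
    phiGL g (transvGL i j hij) (bV g i) = bV g i - bV g j := by
  rw [phiGL_bV, transvGL_inv_coe, bV, bV]
  refine Prod.ext (by simp) ?_
  funext p
  by_cases hpi : p = i <;> by_cases hpj : p = j <;>
    simp_all [Matrix.transvection, Matrix.one_apply, Matrix.single, Pi.single_apply,
      eq_comm]

lemma exists_fresh (hg : 4 ≤ g) (i j k : Fin g) : ∃ m : Fin g, m ≠ i ∧ m ≠ j ∧ m ≠ k := by
  classical
  have h3 : ({i, j, k} : Finset (Fin g)).card ≤ 3 := by
    have h1 := Finset.card_insert_le i ({j, k} : Finset (Fin g))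
    have h2 := Finset.card_insert_le j ({k} : Finset (Fin g))
    simp only [Finset.card_singleton] at h1 h2
    omega
  have hpos : 0 < (({i, j, k} : Finset (Fin g))ᶜ).card := by
    rw [Finset.card_compl, Fintype.card_fin]
    omega
  obtain ⟨m, hm⟩ := Finset.card_pos.mp hpos
  rw [Finset.mem_compl, Finset.mem_insert, Finset.mem_insert, Finset.mem_singleton] at hm
  push_neg at hm
  exact ⟨m, hm.1, hm.2.1, hm.2.2⟩

end Transv

theorem gl_invariant_hom_of_ext_cube_is_zero (g : ℕ) (hg : 4 ≤ g)
    (A : Type*) [AddCommGroup A]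
    (f : (⋀[ℤ]^3 ((Fin g → ℤ) × (Fin g → ℤ))) →+ A)
    (hf : ∀ (G : GL (Fin g) ℤ) (v : ⋀[ℤ]^3 ((Fin g → ℤ) × (Fin g → ℤ))),
      f (extPowerMap 3 (phiGL g G) v) = f v) :
    f = 0 := by
  classical
  set H := (Fin g → ℤ) × (Fin g → ℤ) with hH
  let F : H [⋀^Fin 3]→ₗ[ℤ] A := f.toIntLinearMap.compAlternatingMap (ιMultiP 3)
  have hFval : ∀ v : Fin 3 → H, F v = f (ιMultiP 3 v) := fun v => rfl
  -- invariance of F under the GL action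
  have hFinv : ∀ (G : GL (Fin g) ℤ) (x y z : H),
      F ![phiGL g G x, phiGL g G y, phiGL g G z] = F ![x, y, z] := by
    intro G x y z
    have h1 : phiGL g G ∘ ![x, y, z] = ![phiGL g G x, phiGL g G y, phiGL g G z] := by
      funext t; fin_cases t <;> rfl
    rw [hFval, hFval, ← h1, ← extPowerMap_ιMultiP 3 (phiGL g G) ![x, y, z]]
    exact hf G _
  -- vanishing on the basic wedge types
  have Laaa : ∀ i j k : Fin g, F ![aV g i, aV g j, aV g k] = 0 := by
    intro i j k
    obtain ⟨m, hmi, hmj, hmk⟩ := exists_fresh hg i j k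
    have him : i ≠ m := Ne.symm hmi
    have h := hFinv (transvGL i m him) (aV g m) (aV g j) (aV g k)
    rw [phiT_a_j i m him, phiT_a_ne i m him j (Ne.symm hmj),
      phiT_a_ne i m him k (Ne.symm hmk), tri_add0] at h
    exact add_eq_left.mp h
  have Laab' : ∀ i j k : Fin g, k ≠ i → F ![aV g i, aV g j, bV g k] = 0 := by
    intro i j k hki
    obtain ⟨m, hmi, hmj, _⟩ := exists_fresh hg i j k
    have him : i ≠ m := Ne.symm hmi
    have h := hFinv (transvGL i m him) (aV g m) (aV g j) (bV g k)
    rw [phiT_a_j i m him, phiT_a_ne i m him j (Ne.symm hmj),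
      phiT_b_ne i m him k hki, tri_add0] at h
    exact add_eq_left.mp h
  have Laab : ∀ i j k : Fin g, F ![aV g i, aV g j, bV g k] = 0 := by
    intro i j k
    by_cases hki : k = i
    · subst hki
      by_cases hkj : k = j
      · subst hkj
        exact tri_eq01 F _ _
      · rw [tri_swap01 F (aV g j) (aV g k) (bV g k), Laab' j k k (fun h => hkj h), neg_zero]
    · exact Laab' i j k hki
  have Labb' : ∀ i j k : Fin g, i ≠ j → F ![aV g i, bV g j, bV g k] = 0 := by
    intro i j k hij2
    obtain ⟨m, hmi, hmj, hmk⟩ := exists_fresh hg i j k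
    have h := hFinv (transvGL m j hmj) (aV g i) (bV g m) (bV g k)
    rw [phiT_a_ne m j hmj i hij2, phiT_b_i m j hmj,
      phiT_b_ne m j hmj k (Ne.symm hmk), tri_sub1] at h
    exact sub_eq_self.mp h
  have Labb : ∀ i j k : Fin g, F ![aV g i, bV g j, bV g k] = 0 := by
    intro i j k
    by_cases hij2 : i = j
    · subst hij2
      by_cases hik : i = k
      · subst hik
        exact tri_eq12 F _ _
      · rw [tri_swap12 F (aV g i) (bV g k) (bV g i), Labb' i k i (fun h => hik h), neg_zero]
    · exact Labb' i j k hij2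
  have Lbbb : ∀ i j k : Fin g, F ![bV g i, bV g j, bV g k] = 0 := by
    intro i j k
    obtain ⟨m, hmi, hmj, hmk⟩ := exists_fresh hg i j k
    have h := hFinv (transvGL m i hmi) (bV g m) (bV g j) (bV g k)
    rw [phiT_b_i m i hmi, phiT_b_ne m i hmi j (Ne.symm hmj),
      phiT_b_ne m i hmi k (Ne.symm hmk), tri_sub0] at h
    exact sub_eq_self.mp h
  -- basis of H
  let B : Module.Basis (Fin g ⊕ Fin g) ℤ H := (Pi.basisFun ℤ (Fin g)).prod (Pi.basisFun ℤ (Fin g))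
  have hBl : ∀ i : Fin g, B (Sum.inl i) = aV g i := by
    intro i
    refine Prod.ext ?_ ?_
    · rw [show B (Sum.inl i) = ((Pi.basisFun ℤ (Fin g)).prod (Pi.basisFun ℤ (Fin g))) (Sum.inl i)
        from rfl, Module.Basis.prod_apply_inl_fst, Pi.basisFun_apply]; rfl
    · rw [show B (Sum.inl i) = ((Pi.basisFun ℤ (Fin g)).prod (Pi.basisFun ℤ (Fin g))) (Sum.inl i)
        from rfl, Module.Basis.prod_apply_inl_snd]; rfl
  have hBr : ∀ i : Fin g, B (Sum.inr i) = bV g i := by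
    intro i
    refine Prod.ext ?_ ?_
    · rw [show B (Sum.inr i) = ((Pi.basisFun ℤ (Fin g)).prod (Pi.basisFun ℤ (Fin g))) (Sum.inr i)
        from rfl, Module.Basis.prod_apply_inr_fst]; rfl
    · rw [show B (Sum.inr i) = ((Pi.basisFun ℤ (Fin g)).prod (Pi.basisFun ℤ (Fin g))) (Sum.inr i)
        from rfl, Module.Basis.prod_apply_inr_snd, Pi.basisFun_apply]; rfl
  -- F vanishes on basis triples
  have hFzero : ∀ v : Fin 3 → (Fin g ⊕ Fin g), F (fun t => B (v t)) = 0 := by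
    intro v
    have hv : (fun t => B (v t)) = ![B (v 0), B (v 1), B (v 2)] := by
      funext t; fin_cases t <;> rfl
    rw [hv]
    rcases h0 : v 0 with i | i <;> rcases h1 : v 1 with j | j <;> rcases h2 : v 2 with k | k <;>
      simp only [hBl, hBr]
    · exact Laaa i j k
    · exact Laab i j k
    · rw [tri_swap12 F (aV g i) (aV g k) (bV g j), Laab i k j, neg_zero]
    · exact Labb i j k
    · rw [tri_swap01 F (aV g j) (bV g i) (aV g k),
        tri_swap12 F (aV g j) (aV g k) (bV g i), Laab j k i, neg_zero, neg_zero]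
    · rw [tri_swap01 F (aV g j) (bV g i) (bV g k), Labb j i k, neg_zero]
    · rw [tri_swap02 F (aV g k) (bV g j) (bV g i), Labb k j i, neg_zero]
    · exact Lbbb i j k
  -- hence F = 0
  have hF0 : ∀ w : Fin 3 → H, F w = 0 := by
    have heq : F.toMultilinearMap = (0 : MultilinearMap ℤ (fun _ : Fin 3 => H) A) :=
      Module.Basis.ext_multilinear (fun _ => B) (fun v => by
        have := hFzero v
        simpa using this)
    intro w
    have := DFunLike.congr_fun heq w
    simpa using this
  -- conclude f = 0
  ext x
  have hx : x ∈ Submodule.span ℤ (Set.range (ιMultiP (R := ℤ) (M := H) 3)) := by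
    rw [ιMultiP_span]; exact Submodule.mem_top
  refine Submodule.span_induction (p := fun y _ => f y = 0) ?_ ?_ ?_ ?_ hx
  · rintro y ⟨v, rfl⟩
    exact hF0 v
  · exact map_zero f
  · intro y z _ _ hy hz
    rw [map_add, hy, hz, add_zero]
  · intro n y _ hy
    rw [map_zsmul, hy, smul_zero]
end
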